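/- Sperner's lemma for the triangle: any Sperner labeling of a triangulated triangle contains at least one small triangle whose three vertices receive the three distinct labels 1, 2, 3. -/

import Mathlib

open scoped Classical

/-- The `i`-th vertex `e_i` of the standard simplex in `ℝ^N`. -/
noncomputable def vtx (N : ℕ) (i : Fin N) : Fin N → ℝ := fun j => if j = i then 1 else 0

/-- The face of the standard simplex supported on the index set `S`. -/
def simFace (N : ℕ) (S : Finset (Fin N)) : Set (Fin N → ℝ) :=
  {x ∈ stdSimplex ℝ (Fin N) | ∀ i ∉ S, x i = 0}

/-- A triangulation of the standard simplex `Δ = stdSimplex ℝ (Fin N)` (an `(N-1)`-simplex):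
a finite family of `N`-element affinely independent vertex sets whose convex hulls cover `Δ`
and meet face-to-face. -/
structure Triangulation (N : ℕ) where
  facets : Finset (Finset (Fin N → ℝ))
  card_eq : ∀ σ ∈ facets, σ.card = N
  indep : ∀ σ ∈ facets, AffineIndependent ℝ (fun v : {x // x ∈ σ} => (v : Fin N → ℝ))
  covers : (⋃ σ ∈ facets, convexHull ℝ (σ : Set (Fin N → ℝ))) = stdSimplex ℝ (Fin N)
  faceToFace : ∀ σ ∈ facets, ∀ σ' ∈ facets,
    convexHull ℝ (σ : Set (Fin N → ℝ)) ∩ convexHull ℝ (σ' : Set (Fin N → ℝ))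
      = convexHull ℝ ((σ ∩ σ' : Finset (Fin N → ℝ)) : Set (Fin N → ℝ))

/-- The vertex set of a triangulation. -/
noncomputable def Triangulation.vertices {N : ℕ} (T : Triangulation N) :
    Finset (Fin N → ℝ) :=
  T.facets.biUnion id

/-- A Sperner labeling: each vertex `v` receives a label `ℓ v` lying in the support of `v`,
i.e. a vertex lying in the face `conv{e_i : i ∈ S}` is labeled by an element of `S`
(in particular `e_i` is labeled `i`). -/
def IsSperner {N : ℕ} (T : Triangulation N) (ℓ : (Fin N → ℝ) → Fin N) : Prop :=
  ∀ v ∈ T.vertices, v (ℓ v) ≠ 0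
namespace SpernerAux

open Finset

noncomputable def sumF : (Fin 3 → ℝ) →ₗ[ℝ] ℝ :=
  (LinearMap.proj 0 : (Fin 3 → ℝ) →ₗ[ℝ] ℝ) + (LinearMap.proj 1 : (Fin 3 → ℝ) →ₗ[ℝ] ℝ)
    + (LinearMap.proj 2 : (Fin 3 → ℝ) →ₗ[ℝ] ℝ)

lemma sumF_apply (x : Fin 3 → ℝ) : sumF x = x 0 + x 1 + x 2 := rfl

lemma forall_fin3 {P : Fin 3 → Prop} (h0 : P 0) (h1 : P 1) (h2 : P 2) : ∀ i, P i := by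
  intro i; fin_cases i <;> assumption

lemma vec3_0 {α : Type*} (x y z : α) : ![x, y, z] 0 = x := rfl
lemma vec3_1 {α : Type*} (x y z : α) : ![x, y, z] 1 = y := rfl
lemma vec3_2 {α : Type*} (x y z : α) : ![x, y, z] 2 = z := rfl

lemma mem_simplex_iff (x : Fin 3 → ℝ) :
    x ∈ stdSimplex ℝ (Fin 3) ↔ (∀ i, 0 ≤ x i) ∧ sumF x = 1 := by
  simp [stdSimplex, Fin.sum_univ_three, sumF_apply, Set.mem_setOf_eq]

variable {T : Triangulation 3}

lemma hull_sub {σ : Finset (Fin 3 → ℝ)} (hσ : σ ∈ T.facets) :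
    convexHull ℝ (σ : Set (Fin 3 → ℝ)) ⊆ stdSimplex ℝ (Fin 3) := by
  intro x hx
  rw [← T.covers]
  exact Set.mem_biUnion hσ hx

lemma vertex_simplex {σ : Finset (Fin 3 → ℝ)} (hσ : σ ∈ T.facets) {v : Fin 3 → ℝ}
    (hv : v ∈ σ) : v ∈ stdSimplex ℝ (Fin 3) :=
  hull_sub hσ (subset_convexHull ℝ _ hv)

lemma mem_vertices {σ : Finset (Fin 3 → ℝ)} (hσ : σ ∈ T.facets) {v : Fin 3 → ℝ}
    (hv : v ∈ σ) : v ∈ T.vertices :=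
  Finset.mem_biUnion.2 ⟨σ, hσ, hv⟩

/-- representation of a member of the hull of a finset -/
lemma repr_of_mem_hull {σ : Finset (Fin 3 → ℝ)} {x : Fin 3 → ℝ}
    (hx : x ∈ convexHull ℝ (σ : Set (Fin 3 → ℝ))) :
    ∃ w : (Fin 3 → ℝ) → ℝ, (∀ y ∈ σ, 0 ≤ w y) ∧ ∑ y ∈ σ, w y = 1 ∧
      ∑ y ∈ σ, w y • y = x := by
  rw [Finset.convexHull_eq] at hx
  obtain ⟨w, hw0, hw1, hwx⟩ := hx
  exact ⟨w, hw0, hw1, by rw [← Finset.centerMass_eq_of_sum_1 _ _ hw1]; exact hwx⟩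

lemma combo_mem_hull {σ : Finset (Fin 3 → ℝ)} (v : Fin 3 → (Fin 3 → ℝ))
    (hv : ∀ i, v i ∈ σ) (w : Fin 3 → ℝ) (hw0 : ∀ i, 0 ≤ w i) (hw1 : ∑ i, w i = 1) :
    ∑ i, w i • v i ∈ convexHull ℝ (σ : Set (Fin 3 → ℝ)) :=
  (convex_convexHull ℝ _).sum_mem (fun i _ => hw0 i) hw1
    (fun i _ => subset_convexHull ℝ _ (hv i))

/-- Face lemma: a point of the hull where a nonnegative linear functional vanishes lies in
the hull of the vertices where it vanishes. -/
lemma face_lemma {σ : Finset (Fin 3 → ℝ)} (g : (Fin 3 → ℝ) →ₗ[ℝ] ℝ)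
    (hnn : ∀ y ∈ σ, 0 ≤ g y) {x : Fin 3 → ℝ}
    (hx : x ∈ convexHull ℝ (σ : Set (Fin 3 → ℝ))) (hgx : g x = 0) :
    x ∈ convexHull ℝ ((σ.filter fun y => g y = 0 : Finset (Fin 3 → ℝ)) : Set (Fin 3 → ℝ)) := by
  obtain ⟨w, hw0, hw1, hwx⟩ := repr_of_mem_hull hx
  have hterm : ∀ y ∈ σ, w y * g y = 0 := by
    have h0 : ∑ y ∈ σ, w y * g y = 0 := by
      have : g (∑ y ∈ σ, w y • y) = ∑ y ∈ σ, w y * g y := by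
        rw [map_sum]; exact Finset.sum_congr rfl fun y _ => by rw [map_smul]; rfl
      rw [hwx] at this; rw [← this, hgx]
    exact (Finset.sum_eq_zero_iff_of_nonneg
      (fun y hy => mul_nonneg (hw0 y hy) (hnn y hy))).1 h0
  have hw0' : ∀ y ∈ σ, g y ≠ 0 → w y = 0 := by
    intro y hy hgy
    rcases mul_eq_zero.1 (hterm y hy) with h | h
    · exact h
    · exact absurd h hgy
  set τ := σ.filter fun y => g y = 0 with hτ
  have hts : τ ⊆ σ := Finset.filter_subset _ _
  have hsum1 : ∑ y ∈ τ, w y = 1 := by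
    rw [← hw1]
    refine Finset.sum_subset hts ?_
    intro y hy hyn
    exact hw0' y hy (by simpa [hτ, hy] using hyn)
  have hsum2 : ∑ y ∈ τ, w y • y = x := by
    rw [← hwx]
    refine Finset.sum_subset hts ?_
    intro y hy hyn
    rw [hw0' y hy (by simpa [hτ, hy] using hyn), zero_smul]

  have := Finset.centerMass_mem_convexHull τ
    (fun y hy => hw0 y (hts hy)) (by rw [hsum1]; norm_num)
    (fun y hy => Finset.mem_coe.2 hy)
  rwa [Finset.centerMass_eq_of_sum_1 _ _ hsum1, hsum2] at this

end SpernerAux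
namespace SpernerAux

open Finset

variable {T : Triangulation 3}

lemma triple_of_facet {σ : Finset (Fin 3 → ℝ)} (hσ : σ ∈ T.facets) :
    ∃ a b c : Fin 3 → ℝ, a ≠ b ∧ a ≠ c ∧ b ≠ c ∧ σ = {a, b, c} :=
  Finset.card_eq_three.1 (T.card_eq σ hσ)

lemma third_vertex {σ : Finset (Fin 3 → ℝ)} (hσ : σ ∈ T.facets) {a b : Fin 3 → ℝ}
    (ha : a ∈ σ) (hb : b ∈ σ) (hab : a ≠ b) :
    ∃ c, σ = {a, b, c} ∧ a ≠ c ∧ b ≠ c := by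
  have hsub : {a, b} ⊆ σ := by
    intro y hy
    rcases Finset.mem_insert.1 hy with rfl | hy
    · exact ha
    · rw [Finset.mem_singleton.1 hy]; exact hb
  have hcard2 : ({a, b} : Finset (Fin 3 → ℝ)).card = 2 := by
    rw [Finset.card_insert_of_notMem (by simpa using hab), Finset.card_singleton]
  have hdcard : (σ \ {a, b}).card = 1 := by
    rw [Finset.card_sdiff_of_subset hsub, T.card_eq σ hσ, hcard2]
  obtain ⟨c, hc⟩ := Finset.card_eq_one.1 hdcard
  have hcmem : c ∈ σ \ {a, b} := by rw [hc]; exact Finset.mem_singleton_self c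
  have hca : a ≠ c := by
    rintro rfl; exact (Finset.mem_sdiff.1 hcmem).2 (Finset.mem_insert_self _ _)
  have hcb : b ≠ c := by
    rintro rfl
    exact (Finset.mem_sdiff.1 hcmem).2 (Finset.mem_insert.2 (Or.inr (Finset.mem_singleton_self _)))
  refine ⟨c, ?_, hca, hcb⟩
  apply Finset.Subset.antisymm
  · intro y hy
    by_cases hy2 : y ∈ ({a, b} : Finset (Fin 3 → ℝ))
    · rcases Finset.mem_insert.1 hy2 with rfl | hy2
      · exact Finset.mem_insert_self _ _
      · rw [Finset.mem_singleton.1 hy2]; simp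
    · have : y ∈ σ \ {a, b} := Finset.mem_sdiff.2 ⟨hy, hy2⟩
      rw [hc] at this
      rw [Finset.mem_singleton.1 this]; simp
  · intro y hy
    simp only [Finset.mem_insert, Finset.mem_singleton] at hy
    rcases hy with rfl | rfl | rfl
    · exact ha
    · exact hb
    · exact (Finset.mem_sdiff.1 hcmem).1

lemma facet_linIndep {σ : Finset (Fin 3 → ℝ)} (hσ : σ ∈ T.facets) {a b c : Fin 3 → ℝ}
    (hab : a ≠ b) (hac : a ≠ c) (hbc : b ≠ c) (hset : σ = {a, b, c}) :
    LinearIndependent ℝ ![a, b, c] := by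
  have ha : a ∈ σ := by rw [hset]; simp
  have hb : b ∈ σ := by rw [hset]; simp
  have hc : c ∈ σ := by rw [hset]; simp
  -- affine independence of the explicit triple
  have haff : AffineIndependent ℝ ![a, b, c] := by
    have hind := T.indep σ hσ
    let f : Fin 3 ↪ {x // x ∈ σ} :=
      ⟨![⟨a, ha⟩, ⟨b, hb⟩, ⟨c, hc⟩], by
        intro i j hij
        fin_cases i <;> fin_cases j <;> simp_all <;>
          first
            | rfl
            | (exfalso; first | exact hab (congrArg Subtype.val hij) |
                exact hac (congrArg Subtype.val hij) | exact hbc (congrArg Subtype.val hij) |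
                exact hab (congrArg Subtype.val hij).symm |
                exact hac (congrArg Subtype.val hij).symm |
                exact hbc (congrArg Subtype.val hij).symm)⟩
    have := hind.comp_embedding f
    convert this using 1
    funext i
    fin_cases i <;> rfl
  rw [Fintype.linearIndependent_iff]
  intro w hw
  have hsum0 : w 0 + w 1 + w 2 = 0 := by
    have : sumF (∑ i, w i • ![a, b, c] i) = 0 := by rw [hw]; exact map_zero _
    rw [map_sum] at this
    simp only [map_smul] at this
    rw [Fin.sum_univ_three] at this
    have s1 : sumF a = 1 := ((mem_simplex_iff a).1 (vertex_simplex hσ ha)).2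
    have s2 : sumF b = 1 := ((mem_simplex_iff b).1 (vertex_simplex hσ hb)).2
    have s3 : sumF c = 1 := ((mem_simplex_iff c).1 (vertex_simplex hσ hc)).2
    simp only [Matrix.cons_val_zero, Matrix.cons_val_one, Matrix.head_cons,
      Matrix.cons_val_two, Matrix.tail_cons, smul_eq_mul] at this
    rw [s1, s2, s3] at this
    linarith
  have := affineIndependent_iff.1 haff Finset.univ w (by rw [Fin.sum_univ_three]; exact hsum0)
    (by rw [hw])
  intro i
  exact this i (Finset.mem_univ i)

/-- The barycentric package: a linear functional vanishing on `a, b` with value 1 at `c`,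
together with barycentric expansion of any point of the affine plane `Σ x = 1`. -/
lemma facet_pack {σ : Finset (Fin 3 → ℝ)} (hσ : σ ∈ T.facets) {a b c : Fin 3 → ℝ}
    (hab : a ≠ b) (hac : a ≠ c) (hbc : b ≠ c) (hset : σ = {a, b, c}) :
    ∃ g : (Fin 3 → ℝ) →ₗ[ℝ] ℝ, g a = 0 ∧ g b = 0 ∧ g c = 1 ∧
      ∀ x : Fin 3 → ℝ, sumF x = 1 →
        ∃ α β : ℝ, x = α • a + β • b + g x • c ∧ α + β + g x = 1 := by
  have hli := facet_linIndep hσ hab hac hbc hset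
  have hcard : Fintype.card (Fin 3) = Module.finrank ℝ (Fin 3 → ℝ) := by
    simp
  let B := basisOfLinearIndependentOfCardEqFinrank hli hcard
  have hB : ∀ i, B i = ![a, b, c] i := fun i => by
    rw [coe_basisOfLinearIndependentOfCardEqFinrank]
  refine ⟨B.coord 2, ?_, ?_, ?_, ?_⟩
  · have : B.coord 2 (B 0) = 0 := by simp [Module.Basis.coord_apply, Module.Basis.repr_self]
    rwa [hB 0] at this
  · have : B.coord 2 (B 1) = 0 := by simp [Module.Basis.coord_apply, Module.Basis.repr_self]
    rwa [hB 1] at this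
  · have : B.coord 2 (B 2) = 1 := by simp [Module.Basis.coord_apply, Module.Basis.repr_self]
    rwa [hB 2] at this
  · intro x hx
    refine ⟨B.repr x 0, B.repr x 1, ?_, ?_⟩
    · have := B.sum_repr x
      rw [Fin.sum_univ_three] at this
      rw [Module.Basis.coord_apply]
      nth_rewrite 1 [← this]
      rw [hB 0, hB 1, hB 2]
      rfl
    · have := B.sum_repr x
      rw [Fin.sum_univ_three] at this
      have hsx : sumF (B.repr x 0 • B 0 + B.repr x 1 • B 1 + B.repr x 2 • B 2) = 1 := by
        rw [this, hx]
      simp only [map_add, map_smul, smul_eq_mul] at hsx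
      have s1 : sumF (B 0) = 1 := by
        rw [hB 0]; exact ((mem_simplex_iff a).1 (vertex_simplex hσ (by rw [hset]; simp))).2
      have s2 : sumF (B 1) = 1 := by
        rw [hB 1]; exact ((mem_simplex_iff b).1 (vertex_simplex hσ (by rw [hset]; simp))).2
      have s3 : sumF (B 2) = 1 := by
        rw [hB 2]; exact ((mem_simplex_iff c).1 (vertex_simplex hσ (by rw [hset]; simp))).2
      rw [s1, s2, s3] at hsx
      rw [Module.Basis.coord_apply]
      linarith

end SpernerAux
namespace SpernerAux

open Finset

variable {T : Triangulation 3}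

lemma seg_repr {y z x : Fin 3 → ℝ} (hx : x ∈ convexHull ℝ ({y, z} : Set (Fin 3 → ℝ))) :
    ∃ β γ : ℝ, 0 ≤ β ∧ 0 ≤ γ ∧ β + γ = 1 ∧ x = β • y + γ • z := by
  rw [convexHull_pair] at hx
  obtain ⟨β, γ, hβ, hγ, hβγ, hx⟩ := hx
  exact ⟨β, γ, hβ, hγ, hβγ, hx.symm⟩

lemma li_perm_102 {a b c : Fin 3 → ℝ} (h : LinearIndependent ℝ ![a, b, c]) :
    LinearIndependent ℝ ![b, a, c] := by
  have := h.comp ![1, 0, 2] (by decide)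
  convert this using 1
  funext i
  fin_cases i <;> rfl

lemma li_perm_201 {a b c : Fin 3 → ℝ} (h : LinearIndependent ℝ ![a, b, c]) :
    LinearIndependent ℝ ![c, a, b] := by
  have := h.comp ![2, 0, 1] (by decide)
  convert this using 1
  funext i
  fin_cases i <;> rfl

lemma not_combo {a b c : Fin 3 → ℝ} (h : LinearIndependent ℝ ![a, b, c]) :
    ∀ β γ : ℝ, β + γ = 1 → a ≠ β • b + γ • c := by
  intro β γ hβγ heq
  have := Fintype.linearIndependent_iff.1 h ![1, -β, -γ] ?_ 0
  · simpa using this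
  · rw [Fin.sum_univ_three]
    simp only [Matrix.cons_val_zero, Matrix.cons_val_one, Matrix.head_cons, Matrix.cons_val_two,
      Matrix.tail_cons]
    rw [heq]
    module

lemma mem_of_hull_subset {p q r : Fin 3 → ℝ} (hli : LinearIndependent ℝ ![p, q, r])
    {K : Finset (Fin 3 → ℝ)} (hK : K ⊆ {p, q, r}) {v : Fin 3 → ℝ}
    (hv : v ∈ ({p, q, r} : Finset (Fin 3 → ℝ)))
    (hmem : v ∈ convexHull ℝ (K : Set (Fin 3 → ℝ))) : v ∈ K := by
  by_contra hvK
  have hKsub : ∀ s t : Fin 3 → ℝ, ({p, q, r} : Finset (Fin 3 → ℝ)) ⊆ insert v {s, t} →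
      v ∈ convexHull ℝ ({s, t} : Set (Fin 3 → ℝ)) := by
    intro s t hsub
    refine convexHull_mono ?_ hmem
    intro y hy
    have hy' := hK (Finset.mem_coe.1 hy)
    have := hsub hy'
    rcases Finset.mem_insert.1 this with rfl | h
    · exact absurd (Finset.mem_coe.1 hy) hvK
    · simpa using h
  simp only [Finset.mem_insert, Finset.mem_singleton] at hv
  rcases hv with rfl | rfl | rfl
  · obtain ⟨β, γ, _, _, hβγ, heq⟩ := seg_repr (hKsub q r (by intro y hy; simpa using hy))
    exact not_combo hli β γ hβγ heq
  · obtain ⟨β, γ, _, _, hβγ, heq⟩ := seg_repr (hKsub p r (by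
      intro y hy; simp only [Finset.mem_insert, Finset.mem_singleton] at hy ⊢; tauto))
    exact not_combo (li_perm_102 hli) β γ hβγ heq
  · obtain ⟨β, γ, _, _, hβγ, heq⟩ := seg_repr (hKsub p q (by
      intro y hy; simp only [Finset.mem_insert, Finset.mem_singleton] at hy ⊢; tauto))
    exact not_combo (li_perm_201 hli) β γ hβγ heq

/-- A vertex of the triangulation lying in the hull of a facet is a vertex of that facet. -/
lemma vertex_mem_facet {v : Fin 3 → ℝ} (hv : v ∈ T.vertices) {σ' : Finset (Fin 3 → ℝ)}
    (hσ' : σ' ∈ T.facets) (hmem : v ∈ convexHull ℝ (σ' : Set (Fin 3 → ℝ))) : v ∈ σ' := by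
  obtain ⟨τ, hτ, hvτ⟩ := Finset.mem_biUnion.1 hv
  simp only [id] at hvτ
  have hvK : v ∈ convexHull ℝ ((τ ∩ σ' : Finset (Fin 3 → ℝ)) : Set (Fin 3 → ℝ)) := by
    rw [← T.faceToFace τ hτ σ' hσ']
    exact ⟨subset_convexHull ℝ _ hvτ, hmem⟩
  obtain ⟨p, q, r, hpq, hpr, hqr, hτset⟩ := triple_of_facet hτ
  have hli := facet_linIndep hτ hpq hpr hqr hτset
  have : v ∈ τ ∩ σ' := by
    refine mem_of_hull_subset hli ?_ ?_ hvK
    · rw [← hτset]; exact Finset.inter_subset_left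
    · rw [← hτset]; exact hvτ
  exact (Finset.mem_inter.1 this).2

end SpernerAux
namespace SpernerAux

open Finset Filter

variable {T : Triangulation 3}

lemma coord_le_one {x : Fin 3 → ℝ} (hx : x ∈ stdSimplex ℝ (Fin 3)) (i : Fin 3) : x i ≤ 1 := by
  obtain ⟨hnn, hs⟩ := (mem_simplex_iff x).1 hx
  have h : x i ≤ ∑ j, x j := Finset.single_le_sum (fun j _ => hnn j) (Finset.mem_univ i)
  rw [Fin.sum_univ_three] at h
  rw [sumF_apply] at hs
  linarith

lemma exists_facet_cluster (x : ℕ → (Fin 3 → ℝ)) (hx : ∀ n, x n ∈ stdSimplex ℝ (Fin 3))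
    (m : Fin 3 → ℝ) (hlim : Tendsto x atTop (nhds m)) :
    ∃ σ' ∈ T.facets, m ∈ convexHull ℝ (σ' : Set (Fin 3 → ℝ)) ∧
      ∃ n, x n ∈ convexHull ℝ (σ' : Set (Fin 3 → ℝ)) := by
  have hmem : ∀ n, ∃ σ ∈ T.facets, x n ∈ convexHull ℝ (σ : Set (Fin 3 → ℝ)) := by
    intro n
    have : x n ∈ ⋃ σ ∈ T.facets, convexHull ℝ (σ : Set (Fin 3 → ℝ)) := by
      rw [T.covers]; exact hx n
    simpa using this
  choose f hf1 hf2 using hmem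
  have hpig : ∃ σ' ∈ T.facets, ∃ᶠ n in atTop, f n = σ' := by
    by_contra hcon
    push_neg at hcon
    have hev : ∀ σ' ∈ T.facets, ∀ᶠ n in atTop, f n ≠ σ' := by
      intro σ' hσ'
      have := hcon σ' hσ'
      exact this
    have : ∀ᶠ n in atTop, ∀ σ' ∈ T.facets, f n ≠ σ' := by
      rw [Filter.eventually_all_finset]
      exact hev
    obtain ⟨n, hn⟩ := this.exists
    exact hn (f n) (hf1 n) rfl
  obtain ⟨σ', hσ', hfreq⟩ := hpig
  have hclosed : IsClosed (convexHull ℝ (σ' : Set (Fin 3 → ℝ))) :=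
    (σ'.finite_toSet.isCompact_convexHull ℝ).isClosed
  have hfreq' : ∃ᶠ n in atTop, x n ∈ convexHull ℝ (σ' : Set (Fin 3 → ℝ)) :=
    hfreq.mono fun n h => h ▸ hf2 n
  exact ⟨σ', hσ', hclosed.mem_of_frequently_of_tendsto hfreq' hlim, hfreq'.exists⟩

lemma inter_pair {σ σ' : Finset (Fin 3 → ℝ)} (hσ : σ ∈ T.facets) (hσ' : σ' ∈ T.facets)
    (hne : σ' ≠ σ) {a b c : Fin 3 → ℝ} (hset : σ = {a, b, c}) (hac : a ≠ c) (hbc : b ≠ c)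
    (ha' : a ∈ σ') (hb' : b ∈ σ') :
    σ ∩ σ' = {a, b} := by
  have hcne : c ∉ σ' := by
    intro hc
    apply hne
    refine (Finset.eq_of_subset_of_card_le ?_ ?_).symm
    · rw [hset]
      intro y hy
      simp only [Finset.mem_insert, Finset.mem_singleton] at hy
      rcases hy with rfl | rfl | rfl
      exacts [ha', hb', hc]
    · rw [T.card_eq σ hσ, T.card_eq σ' hσ']
      -- cards equal

  apply Finset.Subset.antisymm
  · intro y hy
    obtain ⟨hy1, hy2⟩ := Finset.mem_inter.1 hy
    rw [hset] at hy1
    simp only [Finset.mem_insert, Finset.mem_singleton] at hy1 ⊢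
    rcases hy1 with rfl | rfl | rfl
    · exact Or.inl rfl
    · exact Or.inr rfl
    · exact absurd hy2 hcne
  · intro y hy
    simp only [Finset.mem_insert, Finset.mem_singleton] at hy
    rcases hy with rfl | rfl
    · exact Finset.mem_inter.2 ⟨by rw [hset]; simp, ha'⟩
    · exact Finset.mem_inter.2 ⟨by rw [hset]; simp, hb'⟩

lemma hull_g_nonneg {σ : Finset (Fin 3 → ℝ)} {a b c : Fin 3 → ℝ} (hset : σ = {a, b, c})
    (g : (Fin 3 → ℝ) →ₗ[ℝ] ℝ) (hga : g a = 0) (hgb : g b = 0) (hgc : g c = 1)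
    {x : Fin 3 → ℝ} (hx : x ∈ convexHull ℝ (σ : Set (Fin 3 → ℝ))) : 0 ≤ g x := by
  obtain ⟨w, hw0, _, hwx⟩ := repr_of_mem_hull hx
  have : g x = ∑ y ∈ σ, w y * g y := by
    rw [← hwx, map_sum]
    exact Finset.sum_congr rfl fun y _ => by rw [map_smul]; rfl
  rw [this]
  apply Finset.sum_nonneg
  intro y hy
  apply mul_nonneg (hw0 y hy)
  rw [hset] at hy
  simp only [Finset.mem_insert, Finset.mem_singleton] at hy
  rcases hy with rfl | rfl | rfl <;> simp [hga, hgb, hgc]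

/-- A1: the third vertex of another facet sharing the edge `{a,b}` lies strictly on the
other side. -/
lemma opp_side {σ σ' : Finset (Fin 3 → ℝ)} (hσ : σ ∈ T.facets) (hσ' : σ' ∈ T.facets)
    (hne : σ' ≠ σ) {a b c c' : Fin 3 → ℝ}
    (hab : a ≠ b) (hac : a ≠ c) (hbc : b ≠ c) (hset : σ = {a, b, c})
    (hac' : a ≠ c') (hbc' : b ≠ c') (hset' : σ' = {a, b, c'})
    (g : (Fin 3 → ℝ) →ₗ[ℝ] ℝ) (hga : g a = 0) (hgb : g b = 0) (hgc : g c = 1)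
    (hexp : ∀ x : Fin 3 → ℝ, sumF x = 1 →
      ∃ α β : ℝ, x = α • a + β • b + g x • c ∧ α + β + g x = 1) :
    g c' < 0 := by
  have ha' : a ∈ σ' := by rw [hset']; simp
  have hb' : b ∈ σ' := by rw [hset']; simp
  have hc'S : c' ∈ σ' := by rw [hset']; simp
  have hc'sum : sumF c' = 1 := ((mem_simplex_iff c').1 (vertex_simplex hσ' hc'S)).2
  obtain ⟨α, β, hrep, hsum⟩ := hexp c' hc'sum
  have hli' := facet_linIndep hσ' hab hac' hbc' hset'
  have hγne : g c' ≠ 0 := by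
    intro h0
    rw [h0] at hrep hsum
    have : c' = α • a + β • b := by rw [hrep]; module
    exact not_combo (li_perm_201 hli') α β (by linarith) this
  rcases lt_or_gt_of_ne hγne with h | h
  · exact h
  exfalso
  -- t small positive
  set γ := g c' with hγ
  set t := min (1/2 : ℝ) (1/(4*(1+|α|+|β|))) with ht
  have habs : (0:ℝ) < 1 + |α| + |β| := by positivity
  have ht0 : 0 < t := by
    apply lt_min
    · norm_num
    · positivity
  have ht12 : t ≤ 1/2 := min_le_left _ _
  have htα : t * |α| ≤ 1/4 := by
    have h1 : t ≤ 1/(4*(1+|α|+|β|)) := min_le_right _ _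
    have h2 : t * |α| ≤ (1/(4*(1+|α|+|β|))) * |α| :=
      mul_le_mul_of_nonneg_right h1 (abs_nonneg α)
    have h3 : (1/(4*(1+|α|+|β|))) * |α| ≤ 1/4 := by
      rw [div_mul_eq_mul_div, one_mul, div_le_div_iff₀ (by positivity) (by norm_num)]
      have := abs_nonneg α; have := abs_nonneg β
      nlinarith
    linarith
  have htβ : t * |β| ≤ 1/4 := by
    have h1 : t ≤ 1/(4*(1+|α|+|β|)) := min_le_right _ _
    have h2 : t * |β| ≤ (1/(4*(1+|α|+|β|))) * |β| :=
      mul_le_mul_of_nonneg_right h1 (abs_nonneg β)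
    have h3 : (1/(4*(1+|α|+|β|))) * |β| ≤ 1/4 := by
      rw [div_mul_eq_mul_div, one_mul, div_le_div_iff₀ (by positivity) (by norm_num)]
      have := abs_nonneg α; have := abs_nonneg β
      nlinarith
    linarith
  set x := ((1-t)/2) • a + ((1-t)/2) • b + t • c' with hxdef
  have hxσ' : x ∈ convexHull ℝ (σ' : Set (Fin 3 → ℝ)) := by
    have := combo_mem_hull (σ := σ') ![a, b, c']
      (forall_fin3 (by rw [vec3_0]; exact ha') (by rw [vec3_1]; exact hb')
        (by rw [vec3_2]; exact hc'S))
      ![(1-t)/2, (1-t)/2, t]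
      (forall_fin3 (by rw [vec3_0]; linarith) (by rw [vec3_1]; linarith)
        (by rw [vec3_2]; linarith))
      (by rw [Fin.sum_univ_three, vec3_0, vec3_1, vec3_2]; ring)
    rw [Fin.sum_univ_three] at this
    simpa [hxdef] using this
  have hxσ : x ∈ convexHull ℝ (σ : Set (Fin 3 → ℝ)) := by
    have hx2 : x = ((1-t)/2 + t*α) • a + ((1-t)/2 + t*β) • b + (t*γ) • c := by
      rw [hxdef, hrep]; module
    have := combo_mem_hull (σ := σ) ![a, b, c]
      (forall_fin3 (by rw [vec3_0]; rw [hset]; simp) (by rw [vec3_1]; rw [hset]; simp)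
        (by rw [vec3_2]; rw [hset]; simp))
      ![(1-t)/2 + t*α, (1-t)/2 + t*β, t*γ]
      (forall_fin3 (by rw [vec3_0]; nlinarith [neg_abs_le α])
        (by rw [vec3_1]; nlinarith [neg_abs_le β]) (by rw [vec3_2]; positivity))
      (by rw [Fin.sum_univ_three, vec3_0, vec3_1, vec3_2]; linear_combination t * hsum)
    rw [Fin.sum_univ_three] at this
    simpa [hx2] using this
  have hxpair : x ∈ convexHull ℝ (({a, b} : Finset (Fin 3 → ℝ)) : Set (Fin 3 → ℝ)) := by
    rw [← inter_pair hσ hσ' hne hset hac hbc ha' hb', ← T.faceToFace σ hσ σ' hσ']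
    exact ⟨hxσ, hxσ'⟩
  have hgx0 : g x = 0 := by
    have : ((({a, b} : Finset (Fin 3 → ℝ)) : Set (Fin 3 → ℝ))) = {a, b} := by simp
    rw [this] at hxpair
    obtain ⟨β', γ', _, _, _, hxeq⟩ := seg_repr hxpair
    rw [hxeq, map_add, map_smul, map_smul, hga, hgb]; simp
  have hgx : g x = t * γ := by
    rw [hxdef]
    simp only [map_add, map_smul, hga, hgb, smul_eq_mul]
    ring
  rw [hgx0] at hgx
  nlinarith

end SpernerAux
namespace SpernerAux

open Finset Filter

variable {T : Triangulation 3}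

/-- A2: no three distinct facets share an edge. -/
lemma at_most_two {σ₀ σ₁ σ₂ : Finset (Fin 3 → ℝ)} (h0 : σ₀ ∈ T.facets) (h1 : σ₁ ∈ T.facets)
    (h2 : σ₂ ∈ T.facets) (h01 : σ₀ ≠ σ₁) (h02 : σ₀ ≠ σ₂) (h12 : σ₁ ≠ σ₂)
    {a b : Fin 3 → ℝ} (hab : a ≠ b)
    (ha0 : a ∈ σ₀) (hb0 : b ∈ σ₀) (ha1 : a ∈ σ₁) (hb1 : b ∈ σ₁) (ha2 : a ∈ σ₂)
    (hb2 : b ∈ σ₂) : False := by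
  obtain ⟨c₀, hset0, hac0, hbc0⟩ := third_vertex h0 ha0 hb0 hab
  obtain ⟨c₁, hset1, hac1, hbc1⟩ := third_vertex h1 ha1 hb1 hab
  obtain ⟨c₂, hset2, hac2, hbc2⟩ := third_vertex h2 ha2 hb2 hab
  obtain ⟨g0, hg0a, hg0b, hg0c, hexp0⟩ := facet_pack h0 hab hac0 hbc0 hset0
  obtain ⟨g1, hg1a, hg1b, hg1c, hexp1⟩ := facet_pack h1 hab hac1 hbc1 hset1
  have hn10 : g0 c₁ < 0 :=
    opp_side h0 h1 h01.symm hab hac0 hbc0 hset0 hac1 hbc1 hset1 g0 hg0a hg0b hg0c hexp0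
  have hn20 : g0 c₂ < 0 :=
    opp_side h0 h2 h02.symm hab hac0 hbc0 hset0 hac2 hbc2 hset2 g0 hg0a hg0b hg0c hexp0
  have hn01 : g1 c₀ < 0 :=
    opp_side h1 h0 h01 hab hac1 hbc1 hset1 hac0 hbc0 hset0 g1 hg1a hg1b hg1c hexp1
  have hn21 : g1 c₂ < 0 :=
    opp_side h1 h2 h12.symm hab hac1 hbc1 hset1 hac2 hbc2 hset2 g1 hg1a hg1b hg1c hexp1
  have hc2sum : sumF c₂ = 1 :=
    ((mem_simplex_iff c₂).1 (vertex_simplex h2 (by rw [hset2]; simp))).2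
  obtain ⟨α, β, hrep, _⟩ := hexp0 c₂ hc2sum
  have : g1 c₂ = g0 c₂ * g1 c₀ := by
    conv_lhs => rw [hrep]
    simp only [map_add, map_smul, hg1a, hg1b, smul_eq_mul]
    ring
  nlinarith

/-- A3: an edge on the boundary of the simplex belongs to only one facet. -/
lemma boundary_unique {σ σ' : Finset (Fin 3 → ℝ)} (hσ : σ ∈ T.facets) (hσ' : σ' ∈ T.facets)
    (hne : σ' ≠ σ) {a b : Fin 3 → ℝ} (hab : a ≠ b)
    (ha : a ∈ σ) (hb : b ∈ σ) (ha' : a ∈ σ') (hb' : b ∈ σ')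
    (i : Fin 3) (hai : a i = 0) (hbi : b i = 0) : False := by
  obtain ⟨c, hset, hac, hbc⟩ := third_vertex hσ ha hb hab
  obtain ⟨c', hset', hac', hbc'⟩ := third_vertex hσ' ha' hb' hab
  obtain ⟨g, hga, hgb, hgc, hexp⟩ := facet_pack hσ hab hac hbc hset
  obtain ⟨g', hga', hgb', hgc', hexp'⟩ := facet_pack hσ' hab hac' hbc' hset'
  set h : (Fin 3 → ℝ) →ₗ[ℝ] ℝ := LinearMap.proj i with hh
  have hha : h a = 0 := hai
  have hhb : h b = 0 := hbi
  have hsumvtx : sumF (vtx 3 i) = 1 := by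
    rw [sumF_apply]
    fin_cases i <;> simp [vtx]
  have hvtxi : h (vtx 3 i) = 1 := by simp [hh, vtx, LinearMap.proj]
  have hpos : ∀ (τ : Finset (Fin 3 → ℝ)), τ ∈ T.facets → ∀ cc, cc ∈ τ →
      ∀ gg : (Fin 3 → ℝ) →ₗ[ℝ] ℝ,
      (∀ x : Fin 3 → ℝ, sumF x = 1 → ∃ α β : ℝ, x = α • a + β • b + gg x • cc ∧
        α + β + gg x = 1) → 0 < h cc := by
    intro τ hτ cc hcc gg hexpg
    have hnn : 0 ≤ h cc := (vertex_simplex hτ hcc).1 i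
    rcases eq_or_lt_of_le hnn with h0 | h0
    · exfalso
      obtain ⟨α, β, hrep, _⟩ := hexpg (vtx 3 i) hsumvtx
      have : h (vtx 3 i) = 0 := by
        rw [hrep]
        simp only [map_add, map_smul, hha, hhb, smul_eq_mul, ← h0]
        ring
      rw [hvtxi] at this
      norm_num at this
    · exact h0
  have hc : 0 < h c := hpos σ hσ c (by rw [hset]; simp) g hexp
  have hc' : 0 < h c' := hpos σ' hσ' c' (by rw [hset']; simp) g' hexp'
  have hgc' : g c' < 0 :=
    opp_side hσ hσ' hne hab hac hbc hset hac' hbc' hset' g hga hgb hgc hexp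
  have hsumc' : sumF c' = 1 :=
    ((mem_simplex_iff c').1 (vertex_simplex hσ' (by rw [hset']; simp))).2
  obtain ⟨α, β, hrep, _⟩ := hexp c' hsumc'
  have : h c' = g c' * h c := by
    conv_lhs => rw [hrep]
    simp only [map_add, map_smul, hha, hhb, smul_eq_mul]
    ring
  nlinarith

/-- Helper: a midpoint of `a, b` in the hull of a subset of `{a,b,c}` forces `a, b` into it. -/
lemma mid_forces {a b c : Fin 3 → ℝ} (hli : LinearIndependent ℝ ![a, b, c])
    {K : Finset (Fin 3 → ℝ)} (hK : K ⊆ {a, b, c})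
    (hm : (1/2 : ℝ) • a + (1/2 : ℝ) • b ∈ convexHull ℝ (K : Set (Fin 3 → ℝ))) :
    a ∈ K ∧ b ∈ K := by
  constructor
  · by_contra haK
    have hsub : (K : Set (Fin 3 → ℝ)) ⊆ {b, c} := by
      intro y hy
      have := hK (Finset.mem_coe.1 hy)
      simp only [Finset.mem_insert, Finset.mem_singleton] at this
      rcases this with rfl | rfl | rfl
      · exact absurd (Finset.mem_coe.1 hy) haK
      · simp
      · simp
    obtain ⟨β, γ, _, _, hβγ, heq⟩ := seg_repr (convexHull_mono hsub hm)
    refine not_combo hli (2*β - 1) (2*γ) (by linarith) ?_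
    have : a = (2:ℝ) • ((1/2 : ℝ) • a + (1/2 : ℝ) • b) - b := by module
    rw [this, heq]; module
  · by_contra hbK
    have hsub : (K : Set (Fin 3 → ℝ)) ⊆ {a, c} := by
      intro y hy
      have := hK (Finset.mem_coe.1 hy)
      simp only [Finset.mem_insert, Finset.mem_singleton] at this
      rcases this with rfl | rfl | rfl
      · simp
      · exact absurd (Finset.mem_coe.1 hy) hbK
      · simp
    obtain ⟨β, γ, _, _, hβγ, heq⟩ := seg_repr (convexHull_mono hsub hm)
    refine not_combo (li_perm_102 hli) (2*β - 1) (2*γ) (by linarith) ?_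
    have : b = (2:ℝ) • ((1/2 : ℝ) • a + (1/2 : ℝ) • b) - a := by module
    rw [this, heq]; module

/-- A4: an interior edge has a second facet. -/
lemma interior_second {σ : Finset (Fin 3 → ℝ)} (hσ : σ ∈ T.facets) {a b : Fin 3 → ℝ}
    (ha : a ∈ σ) (hb : b ∈ σ) (hab : a ≠ b)
    (hint : ∀ i, a i ≠ 0 ∨ b i ≠ 0) :
    ∃ σ' ∈ T.facets, σ' ≠ σ ∧ a ∈ σ' ∧ b ∈ σ' := by
  obtain ⟨c, hset, hac, hbc⟩ := third_vertex hσ ha hb hab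
  obtain ⟨g, hga, hgb, hgc, hexp⟩ := facet_pack hσ hab hac hbc hset
  have hli := facet_linIndep hσ hab hac hbc hset
  set m : Fin 3 → ℝ := (1/2 : ℝ) • a + (1/2 : ℝ) • b with hm
  have haS := vertex_simplex hσ ha
  have hbS := vertex_simplex hσ hb
  have hcS := vertex_simplex hσ (show c ∈ σ by rw [hset]; simp)
  have hmpos : ∀ i, 0 < m i := by
    intro i
    have h1 := haS.1 i
    have h2 := hbS.1 i
    have : m i = (a i + b i)/2 := by
      simp [hm]
      ring
    rw [this]
    rcases hint i with h | h
    · have : 0 < a i := lt_of_le_of_ne h1 (Ne.symm h)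
      linarith
    · have : 0 < b i := lt_of_le_of_ne h2 (Ne.symm h)
      linarith
  set δ : ℝ := min (m 0) (min (m 1) (m 2)) with hδ
  have hδ0 : 0 < δ := lt_min (hmpos 0) (lt_min (hmpos 1) (hmpos 2))
  have hδle : ∀ i, δ ≤ m i := by
    refine forall_fin3 ?_ ?_ ?_
    · exact min_le_left _ _
    · exact le_trans (min_le_right _ _) (min_le_left _ _)
    · exact le_trans (min_le_right _ _) (min_le_right _ _)
  set t : ℕ → ℝ := fun n => δ / (n + 1) with htdef
  have ht0 : ∀ n, 0 < t n := fun n => by positivity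
  have htδ : ∀ n, t n ≤ δ := by
    intro n
    rw [htdef]
    rw [div_le_iff₀ (by positivity)]
    nlinarith [Nat.cast_nonneg (α := ℝ) n]
  set x : ℕ → Fin 3 → ℝ := fun n => m + t n • (m - c) with hx
  have hsm : sumF m = 1 := by
    have s1 : sumF a = 1 := ((mem_simplex_iff a).1 haS).2
    have s2 : sumF b = 1 := ((mem_simplex_iff b).1 hbS).2
    rw [hm]
    simp only [map_add, map_smul, smul_eq_mul, s1, s2]
    norm_num
  have hxS : ∀ n, x n ∈ stdSimplex ℝ (Fin 3) := by
    intro n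
    rw [mem_simplex_iff]
    constructor
    · intro i
      have hci : c i ≤ 1 := coord_le_one hcS i
      have hci0 : 0 ≤ c i := hcS.1 i
      have : x n i = (1 + t n) * m i - t n * c i := by
        simp [hx]
        ring
      rw [this]
      have h1 : t n * c i ≤ t n := by nlinarith [ht0 n]
      have h2 : t n ≤ m i := le_trans (htδ n) (hδle i)
      nlinarith [hmpos i, ht0 n]
    · have s3 : sumF c = 1 := ((mem_simplex_iff c).1 hcS).2
      simp only [hx, map_add, map_smul, map_sub, smul_eq_mul, hsm, s3]
      ring
  have hlim : Tendsto x atTop (nhds m) := by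
    have h1 : Tendsto t atTop (nhds 0) := by
      rw [htdef]
      have := tendsto_one_div_add_atTop_nhds_zero_nat (𝕜 := ℝ)
      have h2 := this.const_mul δ
      simp only [mul_one_div] at h2
      convert h2 using 2 with n
      · push_cast
        ring_nf
    have h2 : Tendsto (fun n => t n • (m - c)) atTop (nhds ((0:ℝ) • (m - c))) :=
      h1.smul_const _
    rw [zero_smul] at h2
    have := tendsto_const_nhds (x := m) (f := atTop (α := ℕ)).add h2
    rw [add_zero] at this
    exact this
  obtain ⟨σ', hσ', hmem, n, hxn⟩ := exists_facet_cluster x hxS m hlim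
  have hgm : g m = 0 := by
    rw [hm]
    simp only [map_add, map_smul, hga, hgb, smul_eq_mul]
    ring
  have hgx : g (x n) < 0 := by
    have : g (x n) = g m + t n * (g m - g c) := by
      simp only [hx, map_add, map_smul, map_sub, smul_eq_mul]
    rw [this, hgm, hgc]
    have := ht0 n
    nlinarith
  have hne : σ' ≠ σ := by
    rintro rfl
    exact absurd (hull_g_nonneg hset g hga hgb hgc hxn) (not_le.2 hgx)
  have hmm : m ∈ convexHull ℝ (σ : Set (Fin 3 → ℝ)) := by
    have := combo_mem_hull (σ := σ) ![a, b, c]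
      (forall_fin3 (by rw [vec3_0]; exact ha) (by rw [vec3_1]; exact hb)
        (by rw [vec3_2]; rw [hset]; simp))
      ![1/2, 1/2, 0]
      (forall_fin3 (by rw [vec3_0]; norm_num) (by rw [vec3_1]; norm_num)
        (by rw [vec3_2]))
      (by rw [Fin.sum_univ_three, vec3_0, vec3_1, vec3_2]; norm_num)
    rw [Fin.sum_univ_three] at this
    simp only [vec3_0, vec3_1, vec3_2] at this
    rw [hm]
    convert this using 1
    module
  have hK : m ∈ convexHull ℝ ((σ ∩ σ' : Finset (Fin 3 → ℝ)) : Set (Fin 3 → ℝ)) := by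
    rw [← T.faceToFace σ hσ σ' hσ']
    exact ⟨hmm, hmem⟩
  have hKsub : σ ∩ σ' ⊆ {a, b, c} := by rw [← hset]; exact Finset.inter_subset_left
  obtain ⟨haK, hbK⟩ := mid_forces hli hKsub (by rw [← hm]; exact hK)
  exact ⟨σ', hσ', hne, (Finset.mem_inter.1 haK).2, (Finset.mem_inter.1 hbK).2⟩

end SpernerAux
namespace SpernerAux

open Finset Filter

variable {T : Triangulation 3}

lemma vtx_simplex (i : Fin 3) : vtx 3 i ∈ stdSimplex ℝ (Fin 3) := by
  rw [mem_simplex_iff]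
  constructor
  · intro j
    simp only [vtx]
    split_ifs <;> norm_num
  · rw [sumF_apply]
    fin_cases i <;> simp [vtx]

/-- The extreme points `e_i` are vertices of the triangulation. -/
lemma vtx_mem_facet (i : Fin 3) : ∃ σ ∈ T.facets, vtx 3 i ∈ σ := by
  have hmem : vtx 3 i ∈ ⋃ σ ∈ T.facets, convexHull ℝ (σ : Set (Fin 3 → ℝ)) := by
    rw [T.covers]; exact vtx_simplex i
  simp only [Set.mem_iUnion] at hmem
  obtain ⟨σ, hσ, hv⟩ := hmem
  refine ⟨σ, hσ, ?_⟩
  obtain ⟨w, hw0, hw1, hwx⟩ := repr_of_mem_hull hv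
  have key : ∑ y ∈ σ, w y * (1 - y i) = 0 := by
    have h1 : ∑ y ∈ σ, w y * y i = 1 := by
      have := congrFun hwx i
      rw [Finset.sum_apply] at this
      simp only [Pi.smul_apply, smul_eq_mul] at this
      rw [this]
      simp [vtx]
    have : ∑ y ∈ σ, w y * (1 - y i) = (∑ y ∈ σ, w y) - ∑ y ∈ σ, w y * y i := by
      rw [← Finset.sum_sub_distrib]
      exact Finset.sum_congr rfl fun y _ => by ring
    rw [this, hw1, h1]
    ring
  obtain ⟨y, hy, hwy⟩ : ∃ y ∈ σ, w y ≠ 0 := by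
    by_contra hc
    push_neg at hc
    rw [Finset.sum_eq_zero (fun y hy => by rw [hc y hy])] at hw1
    norm_num at hw1
  have hterm := (Finset.sum_eq_zero_iff_of_nonneg (fun z hz => by
    have := coord_le_one (vertex_simplex hσ hz) i
    have := hw0 z hz
    nlinarith)).1 key y hy
  have hyi : y i = 1 := by
    rcases mul_eq_zero.1 hterm with h | h
    · exact absurd h hwy
    · linarith
  have hyS := vertex_simplex hσ hy
  have : y = vtx 3 i := by
    funext j
    by_cases hj : j = i
    · rw [hj, hyi]; simp [vtx]
    · have hnn := hyS.1
      have hsum := ((mem_simplex_iff y).1 hyS).2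
      rw [sumF_apply] at hsum
      have hyj : y j = 0 := by
        have hpair : y j + y i ≤ 1 := by
          have hsub : ({j, i} : Finset (Fin 3)) ⊆ Finset.univ := Finset.subset_univ _
          have := Finset.sum_le_sum_of_subset_of_nonneg hsub
            (fun k _ _ => hnn k)
          rw [Finset.sum_pair hj] at this
          rw [Fin.sum_univ_three] at this
          linarith
        have := hnn j
        rw [hyi] at hpair
        linarith
      rw [hyj]
      simp [vtx, hj]
  rwa [← this]

lemma vtx_mem_vertices (i : Fin 3) : vtx 3 i ∈ T.vertices := by
  obtain ⟨σ, hσ, hv⟩ := vtx_mem_facet (T := T) i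
  exact mem_vertices hσ hv

lemma facet_not_flat {σ : Finset (Fin 3 → ℝ)} (hσ : σ ∈ T.facets) (i : Fin 3) :
    ∃ y ∈ σ, y i ≠ 0 := by
  by_contra hc
  push_neg at hc
  obtain ⟨a, b, c, hab, hac, hbc, hset⟩ := triple_of_facet hσ
  obtain ⟨g, hga, hgb, hgc, hexp⟩ := facet_pack hσ hab hac hbc hset
  have hsumvtx : sumF (vtx 3 i) = 1 := ((mem_simplex_iff _).1 (vtx_simplex i)).2
  obtain ⟨α, β, hrep, _⟩ := hexp (vtx 3 i) hsumvtx
  have h1 : vtx 3 i i = 1 := by simp [vtx]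
  have h0 : vtx 3 i i = 0 := by
    rw [hrep]
    simp only [Pi.add_apply, Pi.smul_apply, smul_eq_mul]
    rw [hc a (by rw [hset]; simp), hc b (by rw [hset]; simp), hc c (by rw [hset]; simp)]
    ring
  rw [h1] at h0
  norm_num at h0

lemma flat_card_le_two {σ : Finset (Fin 3 → ℝ)} (hσ : σ ∈ T.facets) :
    (σ.filter fun y => y 2 = 0).card ≤ 2 := by
  by_contra hc
  push_neg at hc
  have hsub : σ.filter (fun y => y 2 = 0) ⊆ σ := Finset.filter_subset _ _
  have hcard : σ.card = 3 := T.card_eq σ hσ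
  have : σ.filter (fun y => y 2 = 0) = σ :=
    Finset.eq_of_subset_of_card_le hsub (by rw [hcard]; exact hc)
  obtain ⟨y, hy, hyne⟩ := facet_not_flat hσ 2
  have : y ∈ σ.filter (fun y => y 2 = 0) := by rw [this]; exact hy
  exact hyne (Finset.mem_filter.1 this).2

lemma Fpoint_ext {x y : Fin 3 → ℝ} (hx : x ∈ stdSimplex ℝ (Fin 3))
    (hy : y ∈ stdSimplex ℝ (Fin 3)) (hx2 : x 2 = 0) (hy2 : y 2 = 0) (h1 : x 1 = y 1) :
    x = y := by
  have hsx := ((mem_simplex_iff x).1 hx).2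
  have hsy := ((mem_simplex_iff y).1 hy).2
  rw [sumF_apply] at hsx hsy
  funext j
  fin_cases j
  · show x 0 = y 0
    rw [hx2] at hsx; rw [hy2] at hsy
    linarith [h1]
  · exact h1
  · show x 2 = y 2
    rw [hx2, hy2]

/-- B1: from a boundary vertex, in any direction with room, there is a boundary cell. -/
lemma cell_dir {v : Fin 3 → ℝ} (hvV : v ∈ T.vertices) (hv2 : v 2 = 0) (s : ℝ)
    (hs : s = 1 ∨ s = -1) (hδ0 : 0 < (if s = 1 then v 0 else v 1)) :
    ∃ σ' ∈ T.facets, ∃ p, p ≠ v ∧ p 2 = 0 ∧ 0 < s * (p 1 - v 1) ∧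
      σ'.filter (fun y => y 2 = 0) = {v, p} := by
  have hvS : v ∈ stdSimplex ℝ (Fin 3) := by
    obtain ⟨τ, hτ, hvτ⟩ := Finset.mem_biUnion.1 hvV
    exact vertex_simplex hτ hvτ
  have hsum := ((mem_simplex_iff v).1 hvS).2
  rw [sumF_apply] at hsum
  have hnn := hvS.1
  set δ : ℝ := if s = 1 then v 0 else v 1 with hδdef
  set t : ℕ → ℝ := fun n => δ / (n + 1) with htdef
  have ht0 : ∀ n, 0 < t n := fun n => by positivity
  have htδ : ∀ n, t n ≤ δ := by
    intro n
    rw [htdef]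
    rw [div_le_iff₀ (by positivity)]
    nlinarith [Nat.cast_nonneg (α := ℝ) n]
  set d : Fin 3 → ℝ := ![-s, s, 0] with hd
  set x : ℕ → Fin 3 → ℝ := fun n => v + t n • d with hx
  have hs2 : s * s = 1 := by rcases hs with rfl | rfl <;> norm_num
  have hxS : ∀ n, x n ∈ stdSimplex ℝ (Fin 3) := by
    intro n
    rw [mem_simplex_iff]
    constructor
    · refine forall_fin3 ?_ ?_ ?_
      · show 0 ≤ v 0 + t n * (-s)
        rcases hs with rfl | rfl
        · have hδv : δ = v 0 := by rw [hδdef]; norm_num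
          have := htδ n; rw [hδv] at this; linarith
        · have := ht0 n; linarith [hnn 0]
      · show 0 ≤ v 1 + t n * s
        rcases hs with rfl | rfl
        · have := ht0 n; linarith [hnn 1]
        · have hδv : δ = v 1 := by rw [hδdef]; norm_num
          have := htδ n; rw [hδv] at this; linarith
      · show 0 ≤ v 2 + t n * 0
        rw [hv2]; norm_num
    · rw [sumF_apply]
      show v 0 + t n * (-s) + (v 1 + t n * s) + (v 2 + t n * 0) = 1
      linarith
  have hlim : Tendsto x atTop (nhds v) := by
    have h1 : Tendsto t atTop (nhds 0) := by
      rw [htdef]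
      have := tendsto_one_div_add_atTop_nhds_zero_nat (𝕜 := ℝ)
      have h2 := this.const_mul δ
      simp only [mul_one_div] at h2
      convert h2 using 2 with n
      push_cast
      ring_nf
    have h2 : Tendsto (fun n => t n • d) atTop (nhds ((0:ℝ) • d)) := h1.smul_const _
    rw [zero_smul] at h2
    have := tendsto_const_nhds (x := v) (f := atTop (α := ℕ)).add h2
    rwa [add_zero] at this
  obtain ⟨σ', hσ', hvmem, n, hxn⟩ := exists_facet_cluster x hxS v hlim
  have hvσ' : v ∈ σ' := vertex_mem_facet hvV hσ' hvmem
  set E := σ'.filter (fun y => y 2 = 0) with hE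
  have hvE : v ∈ E := Finset.mem_filter.2 ⟨hvσ', hv2⟩
  -- x n lies in the hull of E by the face lemma
  have hxnE : x n ∈ convexHull ℝ (E : Set (Fin 3 → ℝ)) := by
    have := face_lemma (σ := σ') (LinearMap.proj 2)
      (fun y hy => (vertex_simplex hσ' hy).1 2) hxn ?_
    · exact this
    · show x n 2 = 0
      show v 2 + t n * 0 = 0
      rw [hv2]; ring
  have hxnv : x n 1 ≠ v 1 := by
    show v 1 + t n * s ≠ v 1
    have := ht0 n
    rcases hs with rfl | rfl <;> intro h <;> nlinarith
  have hEcard : E.card ≤ 2 := flat_card_le_two hσ'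
  -- E has a second element
  have hEne : E ≠ {v} := by
    intro h
    rw [h] at hxnE
    simp only [Finset.coe_singleton, convexHull_singleton, Set.mem_singleton_iff] at hxnE
    exact hxnv (by rw [hxnE])
  have hcard2 : E.card = 2 := by
    have h1 : 1 ≤ E.card := Finset.card_pos.2 ⟨v, hvE⟩
    rcases Nat.lt_or_ge E.card 2 with h | h
    · exfalso
      apply hEne
      have : E.card = 1 := by omega
      obtain ⟨z, hz⟩ := Finset.card_eq_one.1 this
      have hvz : v = z := by rw [hz] at hvE; simpa using hvE
      rw [hz, hvz]
    · omega
  obtain ⟨z1, z2, hz12, hzE⟩ := Finset.card_eq_two.1 hcard2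
  have hvz : v = z1 ∨ v = z2 := by
    have := hvE
    rw [hzE] at this
    simpa using this
  obtain ⟨p, hpne, hEvp⟩ : ∃ p, p ≠ v ∧ E = {v, p} := by
    rcases hvz with rfl | rfl
    · exact ⟨z2, fun h => hz12 h.symm, hzE⟩
    · refine ⟨z1, fun h => hz12 h, by rw [hzE]; exact Finset.pair_comm z1 v⟩
  have hpE : p ∈ E := by rw [hEvp]; simp
  have hp2 : p 2 = 0 := (Finset.mem_filter.1 hpE).2
  -- the coefficient computation
  have hseg : x n ∈ convexHull ℝ ({v, p} : Set (Fin 3 → ℝ)) := by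
    have : ((E : Finset (Fin 3 → ℝ)) : Set (Fin 3 → ℝ)) = {v, p} := by
      rw [hEvp]; simp
    rwa [this] at hxnE
  obtain ⟨β, γ, hβ, hγ, hβγ, hxeq⟩ := seg_repr hseg
  have hcoord : v 1 + t n * s = β * v 1 + γ * p 1 := by
    have := congrFun hxeq 1
    simp only [Pi.add_apply, Pi.smul_apply, smul_eq_mul] at this
    rw [← this]
    rfl
  have hγpos : 0 < γ := by
    rcases eq_or_lt_of_le hγ with h | h
    · exfalso
      apply hxnv
      show v 1 + t n * s = v 1
      rw [hcoord, ← h]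
      have : β = 1 := by linarith
      rw [this]; ring
    · exact h
  have hps : 0 < s * (p 1 - v 1) := by
    have h1 : t n * s = γ * (p 1 - v 1) := by
      have hβ1 : β = 1 - γ := by linarith
      rw [hβ1] at hcoord
      nlinarith
    have h2 : t n = γ * (s * (p 1 - v 1)) := by
      linear_combination s * h1 - t n * hs2
    nlinarith [ht0 n]
  exact ⟨σ', hσ', p, hpne, hp2, hps, hEvp⟩

end SpernerAux
namespace SpernerAux

open Finset

variable {T : Triangulation 3}

lemma sum1_of_simplex {x : Fin 3 → ℝ} (hx : x ∈ stdSimplex ℝ (Fin 3)) :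
    x 0 + x 1 + x 2 = 1 := by
  have := ((mem_simplex_iff x).1 hx).2
  rwa [sumF_apply] at this

lemma cell_between {σ₂ : Finset (Fin 3 → ℝ)} (h2 : σ₂ ∈ T.facets) {v p q : Fin 3 → ℝ}
    (hpV : p ∈ T.vertices) (hv : v ∈ σ₂) (hq : q ∈ σ₂)
    (hv2 : v 2 = 0) (hp2 : p 2 = 0) (hq2 : q 2 = 0) (s : ℝ) (hs : s = 1 ∨ s = -1)
    (hps : 0 < s * (p 1 - v 1)) (hlt : s * (p 1 - v 1) < s * (q 1 - v 1)) : False := by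
  have hs0 : s ≠ 0 := by rcases hs with rfl | rfl <;> norm_num
  have hpS : p ∈ stdSimplex ℝ (Fin 3) := by
    obtain ⟨τ, hτ, hpτ⟩ := Finset.mem_biUnion.1 hpV
    exact vertex_simplex hτ hpτ
  have hvS := vertex_simplex h2 hv
  have hqS := vertex_simplex h2 hq
  have hpv1 : p 1 ≠ v 1 := by
    intro h; rw [h] at hps; simp at hps
  have hqv1 : q 1 ≠ v 1 := by
    intro h
    rw [h] at hlt
    simp at hlt
    nlinarith
  have hpq1 : p 1 ≠ q 1 := by
    intro h; rw [h] at hlt; linarith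
  set θ : ℝ := (p 1 - v 1) / (q 1 - v 1) with hθdef
  have hq1v1 : q 1 - v 1 ≠ 0 := fun h => hqv1 (by linarith)
  have hθeq : θ = (s * (p 1 - v 1)) / (s * (q 1 - v 1)) := by
    rw [hθdef, mul_div_mul_left _ _ hs0]
  have hθpos : 0 < θ := by
    rw [hθeq]
    exact div_pos hps (by linarith)
  have hθlt : θ < 1 := by
    rw [hθeq]
    rw [div_lt_one (by nlinarith)]
    exact hlt
  have hcoord1 : θ * (q 1 - v 1) = p 1 - v 1 := div_mul_cancel₀ _ hq1v1
  have hpeq : p = (1 - θ) • v + θ • q := by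
    funext j
    fin_cases j
    · show p 0 = (1 - θ) * v 0 + θ * q 0
      have e1 := sum1_of_simplex hpS
      have e2 := sum1_of_simplex hvS
      have e3 := sum1_of_simplex hqS
      rw [hp2] at e1; rw [hv2] at e2; rw [hq2] at e3
      nlinarith [hcoord1]
    · show p 1 = (1 - θ) * v 1 + θ * q 1
      nlinarith [hcoord1]
    · show p 2 = (1 - θ) * v 2 + θ * q 2
      rw [hp2, hv2, hq2]; ring
  have hpmem : p ∈ convexHull ℝ (σ₂ : Set (Fin 3 → ℝ)) := by
    rw [hpeq]
    exact (convex_convexHull ℝ _) (subset_convexHull ℝ _ hv) (subset_convexHull ℝ _ hq)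
      (by linarith) (le_of_lt hθpos) (by ring)
  have hpσ₂ : p ∈ σ₂ := vertex_mem_facet hpV h2 hpmem
  have hsub : ({v, p, q} : Finset (Fin 3 → ℝ)) ⊆ σ₂.filter fun y => y 2 = 0 := by
    intro y hy
    simp only [Finset.mem_insert, Finset.mem_singleton] at hy
    rcases hy with rfl | rfl | rfl
    · exact Finset.mem_filter.2 ⟨hv, hv2⟩
    · exact Finset.mem_filter.2 ⟨hpσ₂, hp2⟩
    · exact Finset.mem_filter.2 ⟨hq, hq2⟩
  have hcard3 : ({v, p, q} : Finset (Fin 3 → ℝ)).card = 3 := by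
    rw [Finset.card_insert_of_notMem, Finset.card_insert_of_notMem, Finset.card_singleton]
    · simp only [Finset.mem_singleton]
      intro h; exact hpq1 (by rw [h])
    · simp only [Finset.mem_insert, Finset.mem_singleton]
      push_neg
      constructor
      · intro h; exact hpv1 (by rw [← h])
      · intro h; exact hqv1 (by rw [← h])
  have hle := Finset.card_le_card hsub
  rw [hcard3] at hle
  exact absurd (le_trans hle (flat_card_le_two h2)) (by norm_num)

lemma cell_unique {σ₁ σ₂ : Finset (Fin 3 → ℝ)} (h1 : σ₁ ∈ T.facets) (h2 : σ₂ ∈ T.facets)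
    {v p q : Fin 3 → ℝ} (hp : p ∈ σ₁) (hq : q ∈ σ₂) (hv1 : v ∈ σ₁) (hv2' : v ∈ σ₂)
    (hv2 : v 2 = 0) (hp2 : p 2 = 0) (hq2 : q 2 = 0) (s : ℝ) (hs : s = 1 ∨ s = -1)
    (hps : 0 < s * (p 1 - v 1)) (hqs : 0 < s * (q 1 - v 1)) : p = q := by
  have hs0 : s ≠ 0 := by rcases hs with rfl | rfl <;> norm_num
  rcases lt_trichotomy (s * (p 1 - v 1)) (s * (q 1 - v 1)) with h | h | h
  · exact absurd (cell_between h2 (mem_vertices h1 hp) hv2' hq hv2 hp2 hq2 s hs hps h) id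
  · have : p 1 = q 1 := by
      have : s * (p 1 - q 1) = 0 := by linarith [h]
      rcases mul_eq_zero.1 this with h' | h'
      · exact absurd h' hs0
      · linarith
    obtain ⟨τ, hτ, hpτ⟩ := Finset.mem_biUnion.1 (mem_vertices h1 hp)
    exact Fpoint_ext (vertex_simplex hτ hpτ) (vertex_simplex h2 hq) hp2 hq2 this
  · exact absurd (cell_between h1 (mem_vertices h2 hq) hv1 hp hv2 hq2 hp2 s hs hqs h) id

end SpernerAux
namespace SpernerAux

open Finset

lemma count_swap {A B : Type*} (S : Finset A) (V : Finset B) (R : B → A → Prop) :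
    ∑ a ∈ S, (V.filter fun b => R b a).card = ∑ b ∈ V, (S.filter fun a => R b a).card := by
  have h1 : ∀ a, (V.filter fun b => R b a).card = ∑ b ∈ V, if R b a then 1 else 0 := by
    intro a; rw [Finset.card_filter]
  have h2 : ∀ b, (S.filter fun a => R b a).card = ∑ a ∈ S, if R b a then 1 else 0 := by
    intro b; rw [Finset.card_filter]
  simp_rw [h1, h2]
  exact Finset.sum_comm

lemma sum_mod_two {A : Type*} (s : Finset A) (f : A → ℕ) :
    (∑ a ∈ s, f a) % 2 = (s.filter fun a => f a % 2 = 1).card % 2 := by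
  rw [Finset.sum_nat_mod]
  congr 1
  rw [← Finset.sum_filter_add_sum_filter_not s (fun a => f a % 2 = 1)]
  have h2 : ∑ a ∈ s.filter fun a => ¬(f a % 2 = 1), f a % 2 = 0 := by
    apply Finset.sum_eq_zero
    intro a ha
    have := (Finset.mem_filter.1 ha).2
    omega
  have h1 : ∑ a ∈ s.filter fun a => f a % 2 = 1, f a % 2
      = (s.filter fun a => f a % 2 = 1).card := by
    rw [Finset.card_eq_sum_ones]
    apply Finset.sum_congr rfl
    intro a ha
    exact (Finset.mem_filter.1 ha).2
  rw [h1, h2, add_zero]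

lemma pair_eq_iff {X : Type*} [DecidableEq X] {x y u w : X} (hxy : x ≠ y) :
    ({x, y} : Finset X) = {u, w} ↔ (x = u ∧ y = w) ∨ (x = w ∧ y = u) := by
  rw [← Finset.coe_inj]
  push_cast
  rw [Set.pair_eq_pair_iff]

lemma pow2_triple {X : Type*} [DecidableEq X] {u v w : X} (huv : u ≠ v) (huw : u ≠ w)
    (hvw : v ≠ w) :
    Finset.powersetCard 2 ({u, v, w} : Finset X) = {{u, v}, {u, w}, {v, w}} := by
  ext e
  simp only [Finset.mem_powersetCard, Finset.mem_insert, Finset.mem_singleton]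
  constructor
  · rintro ⟨hsub, hcard⟩
    obtain ⟨x, y, hxy, rfl⟩ := Finset.card_eq_two.1 hcard
    have hx : x ∈ ({u, v, w} : Finset X) := hsub (by simp)
    have hy : y ∈ ({u, v, w} : Finset X) := hsub (by simp)
    simp only [Finset.mem_insert, Finset.mem_singleton] at hx hy
    rcases hx with rfl | rfl | rfl <;> rcases hy with rfl | rfl | rfl <;>
      first
        | exact absurd rfl hxy
        | simp [pair_eq_iff hxy]
  · intro h
    rcases h with rfl | rfl | rfl
    · exact ⟨by intro z hz; simp only [Finset.mem_insert, Finset.mem_singleton] at hz ⊢; tauto,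
        by rw [Finset.card_insert_of_notMem (by simpa using huv)]; rfl⟩
    · exact ⟨by intro z hz; simp only [Finset.mem_insert, Finset.mem_singleton] at hz ⊢; tauto,
        by rw [Finset.card_insert_of_notMem (by simpa using huw)]; rfl⟩
    · exact ⟨by intro z hz; simp only [Finset.mem_insert, Finset.mem_singleton] at hz ⊢; tauto,
        by rw [Finset.card_insert_of_notMem (by simpa using hvw)]; rfl⟩

lemma card_filter_pair {X : Type*} [DecidableEq X] (P : X → Prop) [DecidablePred P]
    {x y : X} (hxy : x ≠ y) :
    (({x, y} : Finset X).filter P).card = (if P x then 1 else 0) + (if P y then 1 else 0) := by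
  rw [Finset.filter_insert, Finset.filter_singleton]
  split_ifs with h1 h2 h2
  · rw [Finset.card_insert_of_notMem (by simpa using hxy)]; rfl
  · simp
  · simp
  · simp

lemma card_filter_triple {X : Type*} [DecidableEq X] (P : X → Prop) [DecidablePred P]
    {x y z : X} (hxy : x ≠ y) (hxz : x ≠ z) (hyz : y ≠ z) :
    (({x, y, z} : Finset X).filter P).card =
      (if P x then 1 else 0) + (if P y then 1 else 0) + (if P z then 1 else 0) := by
  by_cases h1 : P x
  · rw [Finset.filter_insert, if_pos h1, Finset.card_insert_of_notMem
      (fun hx => by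
        have := (Finset.mem_filter.1 hx).1
        simp only [Finset.mem_insert, Finset.mem_singleton] at this
        tauto),
      card_filter_pair P hyz, if_pos h1]
    ring
  · rw [Finset.filter_insert, if_neg h1, card_filter_pair P hyz, if_neg h1]
    ring

lemma fin3_door_parity :
    ∀ a b c : Fin 3,
      ((if ({a, b} : Finset (Fin 3)) = {0, 1} then 1 else 0)
        + (if ({a, c} : Finset (Fin 3)) = {0, 1} then 1 else 0)
        + (if ({b, c} : Finset (Fin 3)) = {0, 1} then 1 else 0)) % 2
      = if ({a, b, c} : Finset (Fin 3)) = Finset.univ then 1 else 0 := by decide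

lemma fin3_zero_parity :
    ∀ a b : Fin 3, a ≠ 2 → b ≠ 2 →
      (((if a = 0 then 1 else 0) + (if b = 0 then 1 else 0)) % 2 = 1
        ↔ ({a, b} : Finset (Fin 3)) = {0, 1}) := by decide

end SpernerAux
namespace SpernerAux

open Finset

variable {T : Triangulation 3}

noncomputable def allE (T : Triangulation 3) : Finset (Finset (Fin 3 → ℝ)) :=
  T.facets.biUnion fun σ => σ.powersetCard 2

lemma mem_allE {e : Finset (Fin 3 → ℝ)} :
    e ∈ allE T ↔ ∃ σ ∈ T.facets, e ⊆ σ ∧ e.card = 2 := by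
  simp [allE, Finset.mem_biUnion, Finset.mem_powersetCard]

noncomputable def deg2 (T : Triangulation 3) (e : Finset (Fin 3 → ℝ)) : ℕ :=
  (T.facets.filter fun σ => e ⊆ σ).card

lemma deg2_boundary {σ₀ : Finset (Fin 3 → ℝ)} (hσ₀ : σ₀ ∈ T.facets)
    {e : Finset (Fin 3 → ℝ)} (he : e ⊆ σ₀) {a b : Fin 3 → ℝ} (hab : a ≠ b)
    (hee : e = {a, b}) (i : Fin 3) (hai : a i = 0) (hbi : b i = 0) : deg2 T e = 1 := by
  have hae : a ∈ e := by rw [hee]; simp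
  have hbe : b ∈ e := by rw [hee]; simp
  have : T.facets.filter (fun σ => e ⊆ σ) = {σ₀} := by
    apply Finset.Subset.antisymm
    · intro σ hσ
      obtain ⟨hσf, hes⟩ := Finset.mem_filter.1 hσ
      rw [Finset.mem_singleton]
      by_contra hne
      exact boundary_unique hσ₀ hσf hne hab (he hae) (he hbe) (hes hae) (hes hbe) i hai hbi
    · intro σ hσ
      rw [Finset.mem_singleton.1 hσ]
      exact Finset.mem_filter.2 ⟨hσ₀, he⟩
  rw [deg2, this, Finset.card_singleton]

lemma deg2_interior {σ₀ : Finset (Fin 3 → ℝ)} (hσ₀ : σ₀ ∈ T.facets)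
    {e : Finset (Fin 3 → ℝ)} (he : e ⊆ σ₀) {a b : Fin 3 → ℝ} (hab : a ≠ b)
    (hee : e = {a, b}) (hint : ∀ i, a i ≠ 0 ∨ b i ≠ 0) : deg2 T e = 2 := by
  have hae : a ∈ e := by rw [hee]; simp
  have hbe : b ∈ e := by rw [hee]; simp
  obtain ⟨σ₁, hσ₁, hne, ha1, hb1⟩ := interior_second hσ₀ (he hae) (he hbe) hab hint
  have he1 : e ⊆ σ₁ := by
    rw [hee]
    intro y hy
    simp only [Finset.mem_insert, Finset.mem_singleton] at hy
    rcases hy with rfl | rfl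
    exacts [ha1, hb1]
  have : T.facets.filter (fun σ => e ⊆ σ) = {σ₀, σ₁} := by
    apply Finset.Subset.antisymm
    · intro σ hσ
      obtain ⟨hσf, hes⟩ := Finset.mem_filter.1 hσ
      simp only [Finset.mem_insert, Finset.mem_singleton]
      by_contra hcon
      push_neg at hcon
      exact at_most_two hσ₀ hσ₁ hσf hne.symm (Ne.symm hcon.1) (Ne.symm hcon.2) hab
        (he hae) (he hbe) ha1 hb1 (hes hae) (hes hbe)
    · intro σ hσ
      simp only [Finset.mem_insert, Finset.mem_singleton] at hσ
      rcases hσ with rfl | rfl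
      · exact Finset.mem_filter.2 ⟨hσ₀, he⟩
      · exact Finset.mem_filter.2 ⟨hσ₁, he1⟩
  rw [deg2, this, Finset.card_insert_of_notMem (by simpa using hne.symm), Finset.card_singleton]

noncomputable def cellsF (T : Triangulation 3) : Finset (Finset (Fin 3 → ℝ)) :=
  (allE T).filter fun e => ∀ y ∈ e, y 2 = 0

lemma cell_shape {e : Finset (Fin 3 → ℝ)} {v : Fin 3 → ℝ} (he : e ∈ cellsF T) (hv : v ∈ e) :
    ∃ σ ∈ T.facets, ∃ p, p ≠ v ∧ e = {v, p} ∧ v ∈ σ ∧ p ∈ σ ∧ p 2 = 0 := by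
  obtain ⟨heA, hflat⟩ := Finset.mem_filter.1 he
  obtain ⟨σ, hσ, hes, hcard⟩ := mem_allE.1 heA
  obtain ⟨x, y, hxy, hexy⟩ := Finset.card_eq_two.1 hcard
  have hvxy : v = x ∨ v = y := by
    have := hv
    rw [hexy] at this
    simpa using this
  obtain ⟨p, hpv, hevp⟩ : ∃ p, p ≠ v ∧ e = {v, p} := by
    rcases hvxy with rfl | rfl
    · exact ⟨y, fun h => hxy h.symm, hexy⟩
    · exact ⟨x, fun h => hxy h, by rw [hexy]; exact Finset.pair_comm x v⟩
  have hpe : p ∈ e := by rw [hevp]; simp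
  exact ⟨σ, hσ, p, hpv, hevp, hes hv, hes hpe, hflat p hpe⟩

lemma cell_mk {σ' : Finset (Fin 3 → ℝ)} (hσ' : σ' ∈ T.facets) {v p : Fin 3 → ℝ}
    (hpv : p ≠ v) (hE : σ'.filter (fun y => y 2 = 0) = {v, p}) :
    ({v, p} : Finset (Fin 3 → ℝ)) ∈ cellsF T := by
  refine Finset.mem_filter.2 ⟨mem_allE.2 ⟨σ', hσ', ?_, ?_⟩, ?_⟩
  · rw [← hE]; exact Finset.filter_subset _ _
  · rw [Finset.card_insert_of_notMem (by simpa using (Ne.symm hpv)), Finset.card_singleton]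
  · intro y hy
    rw [← hE] at hy
    exact (Finset.mem_filter.1 hy).2

noncomputable def deg1 (T : Triangulation 3) (v : Fin 3 → ℝ) : ℕ :=
  ((cellsF T).filter fun e => v ∈ e).card

end SpernerAux
namespace SpernerAux

open Finset

variable {T : Triangulation 3}

lemma vertex_simplex' {v : Fin 3 → ℝ} (hv : v ∈ T.vertices) : v ∈ stdSimplex ℝ (Fin 3) := by
  obtain ⟨τ, hτ, hvτ⟩ := Finset.mem_biUnion.1 hv
  exact vertex_simplex hτ hvτ

lemma deg1_interior {v : Fin 3 → ℝ} (hvV : v ∈ T.vertices) (hv2 : v 2 = 0)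
    (h0 : 0 < v 1) (h1 : v 1 < 1) : deg1 T v = 2 := by
  have hvS := vertex_simplex' hvV
  have hsum := sum1_of_simplex hvS
  have hv0 : 0 < v 0 := by rw [hv2] at hsum; linarith
  obtain ⟨σp, hσp, pp, hppv, hpp2, hpps, hEp⟩ :=
    cell_dir hvV hv2 1 (Or.inl rfl) (by rw [if_pos rfl]; exact hv0)
  obtain ⟨σm, hσm, pm, hpmv, hpm2, hpms, hEm⟩ :=
    cell_dir hvV hv2 (-1) (Or.inr rfl) (by rw [if_neg (by norm_num : (-1:ℝ) ≠ 1)]; exact h0)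
  have hvσp : v ∈ σp := by
    have : v ∈ σp.filter (fun y => y 2 = 0) := by rw [hEp]; simp
    exact (Finset.mem_filter.1 this).1
  have hvσm : v ∈ σm := by
    have : v ∈ σm.filter (fun y => y 2 = 0) := by rw [hEm]; simp
    exact (Finset.mem_filter.1 this).1
  have hppσ : pp ∈ σp := by
    have : pp ∈ σp.filter (fun y => y 2 = 0) := by rw [hEp]; simp
    exact (Finset.mem_filter.1 this).1
  have hpmσ : pm ∈ σm := by
    have : pm ∈ σm.filter (fun y => y 2 = 0) := by rw [hEm]; simp
    exact (Finset.mem_filter.1 this).1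
  have hpp1 : v 1 < pp 1 := by nlinarith
  have hpm1 : pm 1 < v 1 := by nlinarith
  have hfilter : (cellsF T).filter (fun e => v ∈ e) =
      {({v, pp} : Finset (Fin 3 → ℝ)), ({v, pm} : Finset (Fin 3 → ℝ))} := by
    apply Finset.Subset.antisymm
    · intro e hee
      obtain ⟨hec, hve⟩ := Finset.mem_filter.1 hee
      obtain ⟨σ, hσ, p, hpv, hevp, hvσ, hpσ, hp2⟩ := cell_shape hec hve
      simp only [Finset.mem_insert, Finset.mem_singleton]
      rcases lt_trichotomy (p 1) (v 1) with hh | hh | hh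
      · right
        rw [hevp]
        have : p = pm := cell_unique hσ hσm hpσ hpmσ hvσ hvσm hv2 hp2 hpm2 (-1)
          (Or.inr rfl) (by nlinarith) (by nlinarith)
        rw [this]
      · exact absurd (Fpoint_ext (vertex_simplex hσ hpσ) hvS hp2 hv2 hh) hpv
      · left
        rw [hevp]
        have : p = pp := cell_unique hσ hσp hpσ hppσ hvσ hvσp hv2 hp2 hpp2 1
          (Or.inl rfl) (by nlinarith) (by nlinarith)
        rw [this]
    · intro e hee
      simp only [Finset.mem_insert, Finset.mem_singleton] at hee
      rcases hee with rfl | rfl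
      · exact Finset.mem_filter.2 ⟨cell_mk hσp hppv hEp, by simp⟩
      · exact Finset.mem_filter.2 ⟨cell_mk hσm hpmv hEm, by simp⟩
  rw [deg1, hfilter]
  rw [Finset.card_insert_of_notMem, Finset.card_singleton]
  rw [Finset.mem_singleton]
  intro h
  rcases (pair_eq_iff (fun hh => hppv (Eq.symm hh))).1 h with ⟨_, h2⟩ | ⟨h2, _⟩
  · rw [h2] at hpp1; linarith
  · exact hpmv h2.symm

lemma vtx0_coords : vtx 3 0 0 = 1 ∧ vtx 3 0 1 = 0 ∧ vtx 3 0 2 = 0 := by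
  refine ⟨?_, ?_, ?_⟩ <;> simp [vtx]

lemma deg1_vtx0 : deg1 T (vtx 3 0) = 1 := by
  obtain ⟨hc0, hc1, hc2⟩ := vtx0_coords
  have hvV : vtx 3 0 ∈ T.vertices := vtx_mem_vertices 0
  have hvS : vtx 3 0 ∈ stdSimplex ℝ (Fin 3) := vtx_simplex 0
  obtain ⟨σp, hσp, pp, hppv, hpp2, hpps, hEp⟩ :=
    cell_dir hvV hc2 1 (Or.inl rfl) (by rw [if_pos rfl, hc0]; norm_num)
  have hvσp : vtx 3 0 ∈ σp := by
    have : vtx 3 0 ∈ σp.filter (fun y => y 2 = 0) := by rw [hEp]; simp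
    exact (Finset.mem_filter.1 this).1
  have hppσ : pp ∈ σp := by
    have : pp ∈ σp.filter (fun y => y 2 = 0) := by rw [hEp]; simp
    exact (Finset.mem_filter.1 this).1
  have hfilter : (cellsF T).filter (fun e => vtx 3 0 ∈ e) =
      {({vtx 3 0, pp} : Finset (Fin 3 → ℝ))} := by
    apply Finset.Subset.antisymm
    · intro e hee
      obtain ⟨hec, hve⟩ := Finset.mem_filter.1 hee
      obtain ⟨σ, hσ, p, hpv, hevp, hvσ, hpσ, hp2⟩ := cell_shape hec hve
      rw [Finset.mem_singleton]
      have hpS := vertex_simplex hσ hpσ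
      rcases lt_trichotomy (p 1) (vtx 3 0 1) with hh | hh | hh
      · exfalso
        rw [hc1] at hh
        exact absurd hh (not_lt.2 (hpS.1 1))
      · exact absurd (Fpoint_ext hpS hvS hp2 hc2 hh) hpv
      · rw [hevp]
        have : p = pp := cell_unique hσ hσp hpσ hppσ hvσ hvσp hc2 hp2 hpp2 1
          (Or.inl rfl) (by nlinarith) (by nlinarith)
        rw [this]
    · intro e hee
      rw [Finset.mem_singleton.1 hee]
      exact Finset.mem_filter.2 ⟨cell_mk hσp hppv hEp, by simp⟩
  rw [deg1, hfilter, Finset.card_singleton]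

end SpernerAux
namespace SpernerAux

open Finset

variable {T : Triangulation 3} {ℓ : (Fin 3 → ℝ) → Fin 3}

lemma label_ne_two (hℓ : IsSperner T ℓ) {v : Fin 3 → ℝ} (hv : v ∈ T.vertices)
    (hv2 : v 2 = 0) : ℓ v ≠ 2 :=
  fun h => hℓ v hv (by rw [h]; exact hv2)

lemma label_vtx (hℓ : IsSperner T ℓ) (i : Fin 3) : ℓ (vtx 3 i) = i := by
  by_contra h
  exact hℓ _ (vtx_mem_vertices i) (by simp [vtx, h])

lemma fin3_eq_one : ∀ x : Fin 3, x ≠ 0 → x ≠ 2 → x = 1 := by decide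

lemma fin3_door_parity' :
    ∀ a b c : Fin 3,
      (((if ({a, b} : Finset (Fin 3)) = {0, 1} then 1 else 0)
        + (if ({a, c} : Finset (Fin 3)) = {0, 1} then 1 else 0)
        + (if ({b, c} : Finset (Fin 3)) = {0, 1} then 1 else 0)) % 2 = 1
      ↔ ({a, b, c} : Finset (Fin 3)) = Finset.univ) := by decide

theorem sperner_triangle' (T : Triangulation 3) (ℓ : (Fin 3 → ℝ) → Fin 3)
    (hℓ : IsSperner T ℓ) :
    ∃ σ ∈ T.facets, σ.image ℓ = (Finset.univ : Finset (Fin 3)) := by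
  classical
  set doorE : Finset (Finset (Fin 3 → ℝ)) :=
    (allE T).filter (fun e => e.image ℓ = ({0, 1} : Finset (Fin 3))) with hdoorE
  set bdE : Finset (Finset (Fin 3 → ℝ)) :=
    doorE.filter (fun e => ∀ y ∈ e, y 2 = 0) with hbdE
  set V0 : Finset (Fin 3 → ℝ) :=
    T.vertices.filter (fun v => v 2 = 0 ∧ ℓ v = 0) with hV0
  -- Step A: rainbow parity equals parity of total door count
  have hA : (T.facets.filter fun σ => σ.image ℓ = Finset.univ).card % 2
      = (∑ σ ∈ T.facets,
          ((σ.powersetCard 2).filter fun e => e.image ℓ = ({0,1} : Finset (Fin 3))).card) % 2 := by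
    rw [sum_mod_two]
    congr 1
    refine congrArg Finset.card (Finset.filter_congr fun σ hσ => ?_)
    obtain ⟨u, v, w, huv, huw, hvw, hset⟩ := triple_of_facet hσ
    have d1 : ({u, v} : Finset (Fin 3 → ℝ)) ≠ {u, w} := by
      intro h
      rcases (pair_eq_iff huv).1 h with ⟨_, h2⟩ | ⟨h2, _⟩
      · exact hvw h2
      · exact huw h2
    have d2 : ({u, v} : Finset (Fin 3 → ℝ)) ≠ {v, w} := by
      intro h
      rcases (pair_eq_iff huv).1 h with ⟨h2, _⟩ | ⟨h2, _⟩
      · exact huv h2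
      · exact huw h2
    have d3 : ({u, w} : Finset (Fin 3 → ℝ)) ≠ {v, w} := by
      intro h
      rcases (pair_eq_iff huw).1 h with ⟨h2, _⟩ | ⟨h2, h3⟩
      · exact huv h2
      · exact hvw h3.symm
    rw [hset, pow2_triple huv huw hvw, card_filter_triple _ d1 d2 d3]
    simp only [Finset.image_insert, Finset.image_singleton]
    exact (fin3_door_parity' (ℓ u) (ℓ v) (ℓ w)).symm
  -- Step B: swap the double count
  have hB : (∑ σ ∈ T.facets,
        ((σ.powersetCard 2).filter fun e => e.image ℓ = ({0,1} : Finset (Fin 3))).card)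
      = ∑ e ∈ doorE, deg2 T e := by
    have h1 : ∀ σ ∈ T.facets,
        ((σ.powersetCard 2).filter fun e => e.image ℓ = ({0,1} : Finset (Fin 3)))
          = doorE.filter (fun e => e ⊆ σ) := by
      intro σ hσ
      ext e
      simp only [hdoorE, Finset.mem_filter, Finset.mem_powersetCard, mem_allE]
      constructor
      · rintro ⟨⟨hsub, hcard⟩, him⟩
        exact ⟨⟨⟨σ, hσ, hsub, hcard⟩, him⟩, hsub⟩
      · rintro ⟨⟨⟨τ, hτ, hsub', hcard⟩, him⟩, hsub⟩
        exact ⟨⟨hsub, hcard⟩, him⟩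
    rw [Finset.sum_congr rfl fun σ hσ => by rw [h1 σ hσ]]
    calc ∑ σ ∈ T.facets, (doorE.filter (fun e => e ⊆ σ)).card
        = ∑ σ ∈ T.facets, ∑ e ∈ doorE, if e ⊆ σ then 1 else 0 :=
          Finset.sum_congr rfl fun σ _ => Finset.card_filter _ _
      _ = ∑ e ∈ doorE, ∑ σ ∈ T.facets, if e ⊆ σ then 1 else 0 := Finset.sum_comm
      _ = ∑ e ∈ doorE, deg2 T e :=
          Finset.sum_congr rfl fun e _ => (Finset.card_filter _ _).symm
  -- facts about members of doorE
  have hdoorE_facts : ∀ e ∈ doorE, ∃ σ₀ ∈ T.facets, ∃ a b : Fin 3 → ℝ,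
      a ≠ b ∧ e = {a, b} ∧ e ⊆ σ₀ ∧ e.image ℓ = ({0,1} : Finset (Fin 3)) := by
    intro e he
    obtain ⟨heA, him⟩ := Finset.mem_filter.1 he
    obtain ⟨σ₀, hσ₀, hsub, hcard⟩ := mem_allE.1 heA
    obtain ⟨a, b, hab, hee⟩ := Finset.card_eq_two.1 hcard
    exact ⟨σ₀, hσ₀, a, b, hab, hee, hsub, him⟩
  -- Step C: split doorE by boundary
  have hC : (∑ e ∈ doorE, deg2 T e) % 2 = bdE.card % 2 := by
    rw [← Finset.sum_filter_add_sum_filter_not doorE (fun e => ∀ y ∈ e, y 2 = 0) (deg2 T)]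
    have hc1 : ∑ e ∈ doorE.filter (fun e => ∀ y ∈ e, y 2 = 0), deg2 T e = bdE.card := by
      rw [Finset.card_eq_sum_ones]
      apply Finset.sum_congr rfl
      intro e he
      obtain ⟨heD, hbd⟩ := Finset.mem_filter.1 he
      obtain ⟨σ₀, hσ₀, a, b, hab, hee, hsub, him⟩ := hdoorE_facts e heD
      have hae : a ∈ e := by rw [hee]; simp
      have hbe : b ∈ e := by rw [hee]; simp
      exact deg2_boundary hσ₀ hsub hab hee 2 (hbd a hae) (hbd b hbe)
    have hc2 : ∑ e ∈ doorE.filter (fun e => ¬∀ y ∈ e, y 2 = 0), deg2 T e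
        = 2 * (doorE.filter (fun e => ¬∀ y ∈ e, y 2 = 0)).card := by
      rw [Finset.card_eq_sum_ones, Finset.mul_sum]
      apply Finset.sum_congr rfl
      intro e he
      obtain ⟨heD, hnbd⟩ := Finset.mem_filter.1 he
      obtain ⟨σ₀, hσ₀, a, b, hab, hee, hsub, him⟩ := hdoorE_facts e heD
      have hae : a ∈ e := by rw [hee]; simp
      have hbe : b ∈ e := by rw [hee]; simp
      obtain ⟨y0, hy0e, hy0⟩ : ∃ y ∈ e, ℓ y = 0 := by
        have : (0 : Fin 3) ∈ e.image ℓ := by rw [him]; simp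
        simpa using Finset.mem_image.1 this
      obtain ⟨y1, hy1e, hy1⟩ : ∃ y ∈ e, ℓ y = 1 := by
        have : (1 : Fin 3) ∈ e.image ℓ := by rw [him]; simp
        simpa using Finset.mem_image.1 this
      have hy0V : y0 ∈ T.vertices := mem_vertices hσ₀ (hsub hy0e)
      have hy1V : y1 ∈ T.vertices := mem_vertices hσ₀ (hsub hy1e)
      have hy00 : y0 0 ≠ 0 := by have := hℓ y0 hy0V; rwa [hy0] at this
      have hy11 : y1 1 ≠ 0 := by have := hℓ y1 hy1V; rwa [hy1] at this
      have hint : ∀ i, a i ≠ 0 ∨ b i ≠ 0 := by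
        refine forall_fin3 ?_ ?_ ?_
        · have : y0 = a ∨ y0 = b := by
            have := hy0e; rw [hee] at this; simpa using this
          rcases this with rfl | rfl
          · exact Or.inl hy00
          · exact Or.inr hy00
        · have : y1 = a ∨ y1 = b := by
            have := hy1e; rw [hee] at this; simpa using this
          rcases this with rfl | rfl
          · exact Or.inl hy11
          · exact Or.inr hy11
        · push_neg at hnbd
          obtain ⟨y, hye, hy2⟩ := hnbd
          have : y = a ∨ y = b := by
            have := hye; rw [hee] at this; simpa using this
          rcases this with rfl | rfl
          · exact Or.inl hy2
          · exact Or.inr hy2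
      rw [deg2_interior hσ₀ hsub hab hee hint]
      ring
    rw [hc1, hc2]
    exact Nat.add_mul_mod_self_left _ _ _
  -- Step D: boundary doors are exactly labeled cells
  have hD : bdE = (cellsF T).filter (fun e => e.image ℓ = ({0,1} : Finset (Fin 3))) := by
    ext e
    simp only [hbdE, hdoorE, cellsF, Finset.mem_filter]
    tauto
  -- Step E: labeled-cell parity via zero-label counts
  have hE : ((cellsF T).filter (fun e => e.image ℓ = ({0,1} : Finset (Fin 3)))).card % 2
      = (∑ e ∈ cellsF T, (e.filter fun y => ℓ y = 0).card) % 2 := by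
    rw [sum_mod_two]
    congr 1
    refine congrArg Finset.card (Finset.filter_congr fun e he => ?_)
    refine Iff.symm ?_
    obtain ⟨heA, hbd⟩ := Finset.mem_filter.1 he
    obtain ⟨σ₀, hσ₀, hsub, hcard⟩ := mem_allE.1 heA
    obtain ⟨a, b, hab, hee⟩ := Finset.card_eq_two.1 hcard
    have hae : a ∈ e := by rw [hee]; simp
    have hbe : b ∈ e := by rw [hee]; simp
    have haV : a ∈ T.vertices := mem_vertices hσ₀ (hsub hae)
    have hbV : b ∈ T.vertices := mem_vertices hσ₀ (hsub hbe)
    have ha2 : ℓ a ≠ 2 := label_ne_two hℓ haV (hbd a hae)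
    have hb2 : ℓ b ≠ 2 := label_ne_two hℓ hbV (hbd b hbe)
    rw [hee, card_filter_pair _ hab]
    simp only [Finset.image_insert, Finset.image_singleton]
    constructor
    · intro h
      by_cases h1 : ℓ a = 0 <;> by_cases h2 : ℓ b = 0
      · rw [h1, h2] at h; norm_num at h
      · have := fin3_eq_one (ℓ b) h2 hb2
        rw [h1, this]
      · have := fin3_eq_one (ℓ a) h1 ha2
        rw [h2, this]
        decide
      · rw [if_neg h1, if_neg h2] at h; norm_num at h
    · intro h
      by_cases h1 : ℓ a = 0 <;> by_cases h2 : ℓ b = 0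
      · exfalso
        rw [h1, h2] at h
        have : (1 : Fin 3) ∈ ({0, 0} : Finset (Fin 3)) := by rw [h]; simp
        simp at this
      · rw [if_pos h1, if_neg h2]
      · rw [if_neg h1, if_pos h2]
      · exfalso
        have ha1 := fin3_eq_one (ℓ a) h1 ha2
        have hb1 := fin3_eq_one (ℓ b) h2 hb2
        rw [ha1, hb1] at h
        have : (0 : Fin 3) ∈ ({1, 1} : Finset (Fin 3)) := by rw [h]; simp
        simp at this
  -- Step F: swap the 1D double count
  have hF : (∑ e ∈ cellsF T, (e.filter fun y => ℓ y = 0).card) = ∑ v ∈ V0, deg1 T v := by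
    have h1 : ∀ e ∈ cellsF T, (e.filter fun y => ℓ y = 0) = V0.filter (fun v => v ∈ e) := by
      intro e he
      obtain ⟨heA, hbd⟩ := Finset.mem_filter.1 he
      obtain ⟨σ₀, hσ₀, hsub, hcard⟩ := mem_allE.1 heA
      ext y
      simp only [hV0, Finset.mem_filter]
      constructor
      · rintro ⟨hye, hy0⟩
        exact ⟨⟨mem_vertices hσ₀ (hsub hye), hbd y hye, hy0⟩, hye⟩
      · rintro ⟨⟨_, _, hy0⟩, hye⟩
        exact ⟨hye, hy0⟩
    rw [Finset.sum_congr rfl fun e he => by rw [h1 e he]]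
    calc ∑ e ∈ cellsF T, (V0.filter (fun v => v ∈ e)).card
        = ∑ e ∈ cellsF T, ∑ v ∈ V0, if v ∈ e then 1 else 0 :=
          Finset.sum_congr rfl fun e _ => Finset.card_filter _ _
      _ = ∑ v ∈ V0, ∑ e ∈ cellsF T, if v ∈ e then 1 else 0 := Finset.sum_comm
      _ = ∑ v ∈ V0, deg1 T v :=
          Finset.sum_congr rfl fun v _ => (Finset.card_filter _ _).symm
  -- Step G: the 1D degree sum is odd
  have hG : (∑ v ∈ V0, deg1 T v) % 2 = 1 := by
    have hv0mem : vtx 3 0 ∈ V0 := by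
      refine Finset.mem_filter.2 ⟨vtx_mem_vertices 0, ?_, label_vtx hℓ 0⟩
      exact vtx0_coords.2.2
    rw [← Finset.add_sum_erase V0 (deg1 T) hv0mem, deg1_vtx0]
    have h2 : ∀ v ∈ V0.erase (vtx 3 0), deg1 T v = 2 := by
      intro v hv
      have hvne : v ≠ vtx 3 0 := (Finset.mem_erase.1 hv).1
      obtain ⟨hvV, hv2, hv0⟩ := Finset.mem_filter.1 (Finset.mem_erase.1 hv).2
      have hvS := vertex_simplex' hvV
      have h01 : 0 < v 1 := by
        rcases eq_or_lt_of_le (hvS.1 1) with h | h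
        · exfalso
          apply hvne
          exact Fpoint_ext hvS (vtx_simplex 0) hv2 vtx0_coords.2.2 (by rw [← h, vtx0_coords.2.1])
        · exact h
      have h11 : v 1 < 1 := by
        rcases eq_or_lt_of_le (coord_le_one hvS 1) with h | h
        · exfalso
          have hv1c : vtx 3 1 1 = 1 := by simp [vtx]
          have hv2c : vtx 3 1 2 = 0 := by simp [vtx]
          have : v = vtx 3 1 :=
            Fpoint_ext hvS (vtx_simplex 1) hv2 hv2c (by rw [h, hv1c])
          rw [this, label_vtx hℓ 1] at hv0
          exact absurd hv0 (by decide)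
        · exact h
      exact deg1_interior hvV hv2 h01 h11
    rw [Finset.sum_congr rfl h2, Finset.sum_const, smul_eq_mul]
    rw [Nat.add_mul_mod_self_right]
  -- conclude
  have key : (T.facets.filter fun σ => σ.image ℓ = Finset.univ).card % 2 = 1 := by
    rw [hA, hB, hC, hD, hE, hF, hG]
  have hne : (T.facets.filter fun σ => σ.image ℓ = Finset.univ).Nonempty := by
    apply Finset.card_pos.1
    by_contra h
    push_neg at h
    rw [Nat.le_zero.1 h] at key
    norm_num at key
  obtain ⟨σ, hσ⟩ := hne
  exact ⟨σ, (Finset.mem_filter.1 hσ).1, (Finset.mem_filter.1 hσ).2⟩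

end SpernerAux

/-- Sperner's lemma for the triangle: any Sperner labeling of a triangulated
triangle contains a small triangle whose three vertices receive all three labels. -/
theorem sperner_triangle (T : Triangulation 3) (ℓ : (Fin 3 → ℝ) → Fin 3)
    (hℓ : IsSperner T ℓ) :
    ∃ σ ∈ T.facets, σ.image ℓ = (Finset.univ : Finset (Fin 3)) := by
  exact SpernerAux.sperner_triangle' T ℓ hℓ
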